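/- arXiv:2007.05340 — 10 statements merged into one kernel-verified Lean document; each statement's English description precedes it below -/
import Mathlib

section
/- Let r ≥ 1, let λ : Fin r → ℂ be pairwise distinct (injective), let ω : Fin r → ℂ satisfy ω i ≠ 0 for every i, and define the sequence y : ℕ → ℂ by y(k) = ∑_{i} ω i · (λ i)^k. Then the r×r Hankel matrix H of y, with entries H j k = y(j + k) for j, k ∈ Fin r, is invertible (equivalently, H has rank r). -/
open Finset

theorem hankel_invertible_of_distinct_simple_modes
    (r : ℕ) (hr : 1 ≤ r)
    (lam : Fin r → ℂ) (hlam : Function.Injective lam)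
    (ω : Fin r → ℂ) (hω : ∀ i, ω i ≠ 0)
    (y : ℕ → ℂ) (hy : ∀ k, y k = ∑ i, ω i * lam i ^ k)
    (H : Matrix (Fin r) (Fin r) ℂ)
    (hH : ∀ j k : Fin r, H j k = y ((j : ℕ) + (k : ℕ))) :
    IsUnit H := by
  have hfac : H = (Matrix.vandermonde lam).transpose * Matrix.diagonal ω * Matrix.vandermonde lam := by
    ext j k
    simp [Matrix.mul_apply, Matrix.diagonal, Matrix.vandermonde, hH, hy, pow_add,
      Finset.sum_ite_eq, mul_comm, mul_assoc, mul_left_comm]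
  rw [Matrix.isUnit_iff_isUnit_det, hfac, Matrix.det_mul, Matrix.det_mul,
    Matrix.det_transpose, Matrix.det_vandermonde, Matrix.det_diagonal]
  refine (isUnit_iff_ne_zero.2 ?_)
  have hv : ∏ i ∈ Finset.univ.filter (fun i : Fin r => (i:Fin r) < i), (1:ℂ) = 1 := by simp
  have h1 : (∏ i : Fin r, ∏ j ∈ Finset.Ioi i, (lam j - lam i)) ≠ 0 := by
    refine Finset.prod_ne_zero_iff.2 fun i _ => Finset.prod_ne_zero_iff.2 fun j hj => ?_
    exact sub_ne_zero.2 fun h => (Finset.mem_Ioi.1 hj).ne' (hlam h)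
  have h2 : (∏ i : Fin r, ω i) ≠ 0 := Finset.prod_ne_zero_iff.2 fun i _ => hω i
  exact mul_ne_zero (mul_ne_zero h1 h2) h1
end

section
/- Let r ≥ 1, let λ : Fin r → ℂ be pairwise distinct (injective), let ω : Fin r → ℂ satisfy ω i ≠ 0 for every i, and define y : ℕ → ℂ by y(k) = ∑_{i} ω i · (λ i)^k. Suppose α : Fin r → ℂ satisfies the Hankel linear system ∑_{j=0}^{r−1} α j · y(k + j) = − y(k + r) for every k ∈ {0, …, r−1}. Then X^r + ∑_{j=0}^{r−1} (α j) · X^j = ∏_{i} (X − C(λ i)) in ℂ[X]; in particular, every λ i is a root of the polynomial X^r + α_{r−1} X^{r−1} + ⋯ + α_1 X + α_0. -/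
open Finset Polynomial

theorem hankel_system_recovers_characteristic_polynomial
    (r : ℕ) (hr : 1 ≤ r)
    (lam : Fin r → ℂ) (hlam : Function.Injective lam)
    (ω : Fin r → ℂ) (hω : ∀ i, ω i ≠ 0)
    (y : ℕ → ℂ) (hy : ∀ k, y k = ∑ i, ω i * lam i ^ k)
    (α : Fin r → ℂ)
    (hα : ∀ k < r, ∑ j : Fin r, α j * y (k + (j : ℕ)) = - y (k + r)) :
    (X ^ r + ∑ j : Fin r, C (α j) * X ^ (j : ℕ)) = ∏ i, (X - C (lam i)) := by
  set p : Polynomial ℂ := X ^ r + ∑ j : Fin r, C (α j) * X ^ (j : ℕ) with hp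
  have hpev : ∀ z : ℂ, p.eval z = z ^ r + ∑ j : Fin r, α j * z ^ (j : ℕ) := by
    intro z
    simp [hp, eval_finset_sum]
  -- The key Hankel computation
  have hA : ∀ k : ℕ, ∑ i, ω i * p.eval (lam i) * lam i ^ k
      = (∑ j : Fin r, α j * y (k + (j : ℕ))) + y (k + r) := by
    intro k
    simp only [hy, Finset.mul_sum]
    rw [Finset.sum_comm, ← Finset.sum_add_distrib]
    refine Finset.sum_congr rfl fun i _ => ?_
    rw [hpev]
    simp only [pow_add, mul_add, add_mul, Finset.mul_sum, Finset.sum_mul]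
    rw [add_comm]
    congr 1
    exact Finset.sum_congr rfl fun j _ => by ring
    ring
  have hc : (fun i => ω i * p.eval (lam i)) = 0 := by
    refine Matrix.eq_zero_of_forall_pow_sum_mul_pow_eq_zero hlam fun k => ?_
    have h := hA (k : ℕ)
    rw [hα _ k.isLt, neg_add_cancel] at h
    simpa using h
  have hroot : ∀ i, p.eval (lam i) = 0 := by
    intro i
    have := congrFun hc i
    simp only [Pi.zero_apply] at this
    exact (mul_eq_zero.mp this).resolve_left (hω i)
  -- degree facts
  have hdegs : (∑ j : Fin r, C (α j) * X ^ (j : ℕ) : Polynomial ℂ).degree < (r : ℕ) := by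
    refine lt_of_le_of_lt (degree_sum_le _ _) ?_
    rw [Finset.sup_lt_iff (by exact_mod_cast WithBot.bot_lt_coe r)]
    intro j _
    refine lt_of_le_of_lt (degree_C_mul_X_pow_le _ _) ?_
    exact_mod_cast j.isLt
  have hpmonic : p.Monic := monic_X_pow_add hdegs
  have hpdeg : p.natDegree = r := by
    have : p.degree = (r : ℕ) := by
      rw [hp, degree_add_eq_left_of_degree_lt (by simpa [degree_X_pow] using hdegs),
        degree_X_pow]
    exact natDegree_eq_of_degree_eq_some this
  set q : Polynomial ℂ := ∏ i, (X - C (lam i)) with hq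
  have hqmonic : q.Monic := monic_prod_of_monic _ _ fun i _ => monic_X_sub_C _
  have hqdeg : q.natDegree = r := by
    rw [hq, natDegree_prod _ _ fun i _ => X_sub_C_ne_zero _]
    simp
  have hdvd : q ∣ p := by
    refine Finset.prod_dvd_of_coprime ?_ fun i _ => dvd_iff_isRoot.mpr (hroot i)
    exact (Polynomial.pairwise_coprime_X_sub_C hlam).set_pairwise _
  exact (eq_of_monic_of_dvd_of_natDegree_le hqmonic hpmonic hdvd (by rw [hpdeg, hqdeg]))
end

section
/- Let d ≥ 1, let λ : Fin d → ℂ be pairwise distinct (injective), let m : Fin d → ℕ satisfy m i ≥ 1 for every i, and for each i let weights ω i s ∈ ℂ be given for s ∈ {0, …, m i − 1}, with the top weight nonzero: ω i (m i − 1) ≠ 0 for every i. Define y : ℕ → ℂ by y(k) = ∑_{i} ∑_{s=0}^{m i − 1} ω i s · (k.choose s) · (λ i)^{k − s} (natural-number subtraction in the exponent; the term vanishes when k < s since k.choose s = 0). Then for every n ≥ ∑_{i} m i, the n×n Hankel matrix H of y, with entries H j k = y(j + k), has rank equal to ∑_{i} m i. -/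
open Finset Polynomial

noncomputable section HankelAux

set_option linter.unusedVariables false

/-- shift operator on sequences -/
def hkE : (ℕ → ℂ) →ₗ[ℂ] (ℕ → ℂ) where
  toFun f := fun k => f (k+1)
  map_add' f g := rfl
  map_smul' c f := rfl

/-- basic solution functions -/
def hkF (l : ℂ) (a : ℕ) : ℕ → ℂ := fun k => (k.choose a : ℂ) * l ^ (k - a)

lemma hkE_pow (t : ℕ) (f : ℕ → ℂ) (k : ℕ) : (hkE ^ t) f k = f (k + t) := by
  induction t generalizing k with
  | zero => rfl
  | succ t ih =>
      rw [pow_succ', Module.End.mul_apply]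
      show ((hkE ^ t) f) (k+1) = _
      rw [ih]; ring_nf

lemma hk_aeval_apply (P : ℂ[X]) (f : ℕ → ℂ) (k : ℕ) :
    (aeval hkE P) f k = ∑ t ∈ range (P.natDegree + 1), P.coeff t * f (k + t) := by
  rw [aeval_eq_sum_range]
  rw [LinearMap.coe_sum, Finset.sum_apply, Finset.sum_apply]
  exact Finset.sum_congr rfl fun t _ => by
    rw [LinearMap.smul_apply, Pi.smul_apply, hkE_pow, smul_eq_mul]

lemma hk_aeval_geom (P : ℂ[X]) (l : ℂ) :
    (aeval hkE P) (fun k => l ^ k) = fun k => P.eval l * l ^ k := by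
  funext k
  rw [hk_aeval_apply, eval_eq_sum_range, Finset.sum_mul]
  exact Finset.sum_congr rfl fun t _ => by rw [pow_add]; ring

lemma hk_aeval_sub_C (l : ℂ) (f : ℕ → ℂ) :
    (aeval hkE (X - C l)) f = fun k => f (k+1) - l * f k := by
  funext k
  rw [map_sub, aeval_X, aeval_C, LinearMap.sub_apply]
  simp [hkE, Algebra.algebraMap_eq_smul_one]

lemma hk_step (l : ℂ) (a : ℕ) :
    (aeval hkE (X - C l)) (hkF l (a+1)) = hkF l a := by
  rw [hk_aeval_sub_C]
  funext k
  simp only [hkF]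
  rcases lt_trichotomy k a with h | h | h
  · rw [Nat.choose_eq_zero_of_lt (by omega), Nat.choose_eq_zero_of_lt (by omega),
      Nat.choose_eq_zero_of_lt (by omega)]
    simp
  · subst h
    simp [Nat.choose_succ_self, Nat.sub_self]
  · have h1 : k + 1 - (a+1) = k - a := by omega
    have h2 : k - (a+1) + 1 = k - a := by omega
    have hc : (k+1).choose (a+1) = k.choose a + k.choose (a+1) := Nat.choose_succ_succ k a
    rw [h1, ← h2, pow_succ, hc]
    push_cast
    ring

lemma hk_step0 (l : ℂ) : (aeval hkE (X - C l)) (hkF l 0) = 0 := by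
  rw [hk_aeval_sub_C]
  funext k
  simp [hkF, pow_succ, mul_comm]

lemma hk_pow_step (l : ℂ) (e a : ℕ) :
    (aeval hkE ((X - C l)^e)) (hkF l (a + e)) = hkF l a := by
  induction e with
  | zero => simp
  | succ e ih =>
      rw [pow_succ, map_mul, Module.End.mul_apply,
        show a + (e+1) = (a+e) + 1 by ring, hk_step, ih]

lemma hk_pow_kill (l : ℂ) {e a : ℕ} (h : a < e) :
    (aeval hkE ((X - C l)^e)) (hkF l a) = 0 := by
  have : e = (e - (a+1)) + 1 + a := by omega
  rw [this, pow_add, pow_add, map_mul, map_mul, Module.End.mul_apply, Module.End.mul_apply]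
  rw [show hkF l a = hkF l (0 + a) by simp, hk_pow_step, pow_one, hk_step0]
  simp




lemma hkF_zero (l : ℂ) : hkF l 0 = fun k => l ^ k := by
  funext k; simp [hkF]

lemma hk_top {d : ℕ} (lam : Fin d → ℂ) (hlam : Function.Injective lam)
    (m : Fin d → ℕ) (c : Fin d → ℕ → ℂ) (K : ℕ) (hK : ∑ i, m i ≤ K)
    (hwin : ∀ k < K, ∑ i, ∑ a ∈ range (m i), c i a * hkF (lam i) a k = 0)
    (i₀ : Fin d) (h1 : 1 ≤ m i₀) : c i₀ (m i₀ - 1) = 0 := by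
  classical
  set e : Fin d → ℕ := Function.update m i₀ (m i₀ - 1) with he
  have hsum_e : (∑ i, e i) + 1 = ∑ i, m i := by
    rw [he, Finset.sum_update_of_mem (Finset.mem_univ i₀),
      Finset.sum_eq_sum_sdiff_singleton_add (Finset.mem_univ i₀) m]
    omega
  set Q : ℂ[X] := ∏ i, (X - C (lam i))^(e i) with hQ
  have hdeg : Q.natDegree < K := by
    have h1' : Q.natDegree ≤ ∑ i, ((X - C (lam i))^(e i)).natDegree :=
      Polynomial.natDegree_prod_le _ _
    have h2' : ∀ i : Fin d, ((X - C (lam i))^(e i)).natDegree ≤ e i := fun i => by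
      calc ((X - C (lam i))^(e i)).natDegree ≤ e i * (X - C (lam i)).natDegree :=
            Polynomial.natDegree_pow_le
        _ = e i := by rw [Polynomial.natDegree_X_sub_C, mul_one]
    have h3' : (∑ i, ((X - C (lam i))^(e i)).natDegree) ≤ ∑ i, e i :=
      Finset.sum_le_sum fun i _ => h2' i
    omega
  -- value of aeval Q on the window is 0
  have hzero : (aeval hkE Q) (fun k => ∑ i, ∑ a ∈ range (m i), c i a * hkF (lam i) a k) 0 = 0 := by
    rw [hk_aeval_apply]
    refine Finset.sum_eq_zero fun t ht => ?_
    rw [zero_add, hwin t (by simp only [Finset.mem_range] at ht; omega), mul_zero]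
  -- rewrite g as a module-level sum
  have hgsum : (fun k => ∑ i, ∑ a ∈ range (m i), c i a * hkF (lam i) a k)
      = ∑ i, ∑ a ∈ range (m i), c i a • hkF (lam i) a := by
    funext k
    rw [Finset.sum_apply]
    exact Finset.sum_congr rfl fun i _ => by
      rw [Finset.sum_apply]
      exact Finset.sum_congr rfl fun a _ => rfl
  have hkill : ∀ (i : Fin d) (a : ℕ), a < e i → (aeval hkE Q) (hkF (lam i) a) = 0 := by
    intro i a ha
    have hfac : Q = (∏ j ∈ Finset.univ.erase i, (X - C (lam j))^(e j)) * (X - C (lam i))^(e i) := by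
      rw [hQ, ← Finset.mul_prod_erase _ _ (Finset.mem_univ i)]
      exact mul_comm _ _
    rw [hfac, map_mul, Module.End.mul_apply, hk_pow_kill _ ha, map_zero]
  have hsurv : (aeval hkE Q) (hkF (lam i₀) (m i₀ - 1)) 0
      = ∏ j ∈ Finset.univ.erase i₀, (lam i₀ - lam j)^(e j) := by
    have hfac : Q = (∏ j ∈ Finset.univ.erase i₀, (X - C (lam j))^(e j)) * (X - C (lam i₀))^(e i₀) := by
      rw [hQ, ← Finset.mul_prod_erase _ _ (Finset.mem_univ i₀)]
      exact mul_comm _ _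
    have hei₀ : e i₀ = m i₀ - 1 := by rw [he, Function.update_self]
    rw [hfac, map_mul, Module.End.mul_apply, hei₀,
      show hkF (lam i₀) (m i₀ - 1) = hkF (lam i₀) (0 + (m i₀ - 1)) by rw [zero_add],
      hk_pow_step, hkF_zero, hk_aeval_geom]
    simp only [pow_zero, mul_one]
    rw [Polynomial.eval_prod]
    exact Finset.prod_congr rfl fun j _ => by
      rw [Polynomial.eval_pow, Polynomial.eval_sub, Polynomial.eval_X, Polynomial.eval_C]
  have hexp : (aeval hkE Q) (fun k => ∑ i, ∑ a ∈ range (m i), c i a * hkF (lam i) a k) 0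
      = c i₀ (m i₀ - 1) * ∏ j ∈ Finset.univ.erase i₀, (lam i₀ - lam j)^(e j) := by
    rw [hgsum, map_sum, Finset.sum_apply]
    rw [Finset.sum_eq_single i₀]
    · rw [map_sum, Finset.sum_apply]
      rw [Finset.sum_eq_single (m i₀ - 1)]
      · rw [map_smul, Pi.smul_apply, hsurv, smul_eq_mul]
      · intro a ha hane
        have ha' : a < e i₀ := by
          rw [he, Function.update_self]
          simp only [Finset.mem_range] at ha
          omega
        rw [map_smul, Pi.smul_apply, hkill i₀ a ha', Pi.zero_apply, smul_zero]
      · intro h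
        exact absurd (Finset.mem_range.mpr (by omega)) h
    · intro i _ hine
      rw [map_sum, Finset.sum_apply]
      refine Finset.sum_eq_zero fun a ha => ?_
      have ha' : a < e i := by
        rw [he, Function.update_of_ne hine]
        exact Finset.mem_range.mp ha
      rw [map_smul, Pi.smul_apply, hkill i a ha', Pi.zero_apply, smul_zero]
    · intro h
      exact absurd (Finset.mem_univ i₀) h
  have hprod : (∏ j ∈ Finset.univ.erase i₀, (lam i₀ - lam j)^(e j)) ≠ 0 := by
    refine Finset.prod_ne_zero_iff.mpr fun j hj => pow_ne_zero _ ?_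
    have : j ≠ i₀ := Finset.ne_of_mem_erase hj
    exact sub_ne_zero.mpr fun h => this (hlam h.symm)
  have := hexp ▸ hzero
  exact (mul_eq_zero.mp this).resolve_right hprod

lemma hk_indep {d : ℕ} (lam : Fin d → ℂ) (hlam : Function.Injective lam) :
    ∀ (t : ℕ) (m : Fin d → ℕ), (∑ i, m i) = t →
    ∀ (c : Fin d → ℕ → ℂ) (K : ℕ), t ≤ K →
    (∀ k < K, ∑ i, ∑ a ∈ range (m i), c i a * hkF (lam i) a k = 0) →
    ∀ i a, a < m i → c i a = 0 := by
  intro t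
  induction t with
  | zero =>
      intro m hm c K hK hwin i a ha
      have : m i = 0 := by
        have : m i ≤ ∑ j, m j := Finset.single_le_sum (fun j _ => Nat.zero_le _) (Finset.mem_univ i)
        omega
      omega
  | succ t ih =>
      intro m hm c K hK hwin i a ha
      have h1 : 1 ≤ m i := by omega
      have hKm : ∑ j, m j ≤ K := by omega
      have htop : c i (m i - 1) = 0 := hk_top lam hlam m c K hKm hwin i h1
      rcases Nat.lt_or_ge a (m i - 1) with hcase | hcase
      · set m' : Fin d → ℕ := Function.update m i (m i - 1) with hm'
        have hsum' : (∑ j, m' j) = t := by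
          have : (∑ j, m' j) + 1 = ∑ j, m j := by
            rw [hm', Finset.sum_update_of_mem (Finset.mem_univ i),
              Finset.sum_eq_sum_sdiff_singleton_add (Finset.mem_univ i) m]
            omega
          omega
        have hwin' : ∀ k < K, ∑ j, ∑ a ∈ range (m' j), c j a * hkF (lam j) a k = 0 := by
          intro k hk
          have : (∑ j, ∑ a ∈ range (m' j), c j a * hkF (lam j) a k)
              = ∑ j, ∑ a ∈ range (m j), c j a * hkF (lam j) a k := by
            refine Finset.sum_congr rfl fun j _ => ?_
            rcases eq_or_ne j i with rfl | hne
            · rw [hm', Function.update_self,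
                show m j = (m j - 1) + 1 by omega, Finset.sum_range_succ,
                show (m j - 1) + 1 - 1 = m j - 1 by omega, htop, zero_mul, add_zero]
            · rw [hm', Function.update_of_ne hne]
          rw [this]
          exact hwin k hk
        exact ih m' hsum' c K (by omega) hwin' i a
          (by rw [hm', Function.update_self]; omega)
      · have : a = m i - 1 := by omega
        rw [this]
        exact htop



-- triangle reindex
lemma hk_tri (mm : ℕ) (f : ℕ → ℕ → ℂ) :
    ∑ s ∈ range mm, ∑ a ∈ range (s+1), f a (s-a)
      = ∑ a ∈ range mm, ∑ b ∈ range mm, if a+b < mm then f a b else 0 := by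
  classical
  rw [← Finset.sum_sigma (range mm) (fun s => range (s+1)) (fun p => f p.2 (p.1 - p.2))]
  rw [← Finset.sum_product', ← Finset.sum_filter]
  refine Finset.sum_bij' (fun p _ => (p.2, p.1 - p.2)) (fun q _ => ⟨q.1 + q.2, q.1⟩) ?_ ?_ ?_ ?_ ?_
  · intro p hp
    simp only [Finset.mem_sigma, Finset.mem_range] at hp
    simp only [Finset.mem_filter, Finset.mem_product, Finset.mem_range]
    omega
  · intro q hq
    simp only [Finset.mem_filter, Finset.mem_product, Finset.mem_range] at hq
    simp only [Finset.mem_sigma, Finset.mem_range]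
    omega
  · intro p hp
    simp only [Finset.mem_sigma, Finset.mem_range] at hp
    ext <;> simp <;> omega
  · intro q hq
    simp only [Finset.mem_filter, Finset.mem_product, Finset.mem_range] at hq
    simp
  · intro p hp
    rfl

-- block determinant
lemma hk_block_det (mm : ℕ) (w : ℕ → ℂ) (hw : w (mm - 1) ≠ 0) :
    (Matrix.det (Matrix.of fun a b : Fin mm =>
      if (a:ℕ)+(b:ℕ) < mm then w ((a:ℕ)+(b:ℕ)) else 0)) ≠ 0 := by
  set B : Matrix (Fin mm) (Fin mm) ℂ := Matrix.of fun a b : Fin mm =>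
      if (a:ℕ)+(b:ℕ) < mm then w ((a:ℕ)+(b:ℕ)) else 0 with hB
  have h1 : (B.submatrix id Fin.revPerm).det = Equiv.Perm.sign (Fin.revPerm (n := mm)) * B.det :=
    Matrix.det_permute' _ _
  have h2 : (B.submatrix id Fin.revPerm).det = w (mm-1) ^ mm := by
    rw [Matrix.det_of_upperTriangular]
    · have : ∀ a : Fin mm, (B.submatrix id Fin.revPerm) a a = w (mm - 1) := by
        intro a
        have ha : (a:ℕ) < mm := a.isLt
        simp only [Matrix.submatrix_apply, id_eq, hB, Matrix.of_apply, Fin.revPerm_apply,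
          Fin.val_rev]
        rw [if_pos (by omega), show (a:ℕ) + (mm - ((a:ℕ)+1)) = mm - 1 by omega]
      rw [Finset.prod_congr rfl fun a _ => this a, Finset.prod_const, Finset.card_univ,
        Fintype.card_fin]
    · intro a b hab
      simp only [id_eq] at hab
      simp only [Matrix.submatrix_apply, id_eq, hB, Matrix.of_apply, Fin.revPerm_apply,
        Fin.val_rev]
      have ha : (a:ℕ) < mm := a.isLt
      have hb : (b:ℕ) < (a:ℕ) := hab
      rw [if_neg (by omega)]
  intro h0
  rw [h0, mul_zero] at h1
  exact pow_ne_zero mm hw (h2.symm.trans h1)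

lemma hk_entry (mm : ℕ) (w : ℕ → ℂ) (l : ℂ) (j k : ℕ) :
    ∑ s ∈ range mm, w s * ((j+k).choose s : ℂ) * l^(j+k-s)
      = ∑ a ∈ range mm, ∑ b ∈ range mm,
        (if a+b < mm then w (a+b) else 0)
          * ((j.choose a : ℂ) * l^(j-a)) * ((k.choose b : ℂ) * l^(k-b)) := by
  have step1 : ∑ s ∈ range mm, w s * ((j+k).choose s : ℂ) * l^(j+k-s)
      = ∑ s ∈ range mm, ∑ a ∈ range (s+1),
          (fun a b => w (a+b) * (j.choose a : ℂ) * (k.choose b : ℂ) * l^(j+k-(a+b))) a (s-a) := by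
    refine Finset.sum_congr rfl fun s hs => ?_
    rw [Nat.add_choose_eq, Finset.Nat.sum_antidiagonal_eq_sum_range_succ_mk]
    push_cast
    rw [Finset.mul_sum, Finset.sum_mul]
    refine Finset.sum_congr rfl fun a ha => ?_
    have haa : a + (s - a) = s := by
      simp only [Finset.mem_range] at ha; omega
    simp only [haa]
    ring
  rw [step1, hk_tri mm (fun a b => w (a+b) * (j.choose a : ℂ) * (k.choose b : ℂ) * l^(j+k-(a+b)))]
  refine Finset.sum_congr rfl fun a ha => Finset.sum_congr rfl fun b hb => ?_
  by_cases h : a + b < mm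
  · rw [if_pos h, if_pos h]
    by_cases hja : a ≤ j
    · by_cases hkb : b ≤ k
      · rw [show j + k - (a+b) = (j-a) + (k-b) by omega, pow_add]
        ring
      · rw [Nat.choose_eq_zero_of_lt (show k < b by omega)]
        push_cast
        ring
    · rw [Nat.choose_eq_zero_of_lt (show j < a by omega)]
      push_cast
      ring
  · rw [if_neg h, if_neg h]
    simp

end HankelAux

open Finset Matrix

theorem hankel_rank_eq_sum_of_largest_block_sizes
    (d : ℕ) (hd : 1 ≤ d)
    (lam : Fin d → ℂ) (hlam : Function.Injective lam)
    (m : Fin d → ℕ) (hm : ∀ i, 1 ≤ m i)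
    (ω : Fin d → ℕ → ℂ) (hω : ∀ i, ω i (m i - 1) ≠ 0)
    (y : ℕ → ℂ)
    (hy : ∀ k, y k = ∑ i, ∑ s ∈ Finset.range (m i),
      ω i s * (k.choose s : ℂ) * lam i ^ (k - s)) :
    ∀ n : ℕ, (∑ i, m i) ≤ n →
      ∀ H : Matrix (Fin n) (Fin n) ℂ,
        (∀ j k : Fin n, H j k = y ((j : ℕ) + (k : ℕ))) →
        H.rank = ∑ i, m i := by
  intro n hn H hH
  classical
  set V : Matrix (Fin n) ((i : Fin d) × Fin (m i)) ℂ :=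
    Matrix.of fun j p => (((j:ℕ).choose (p.2:ℕ) : ℕ) : ℂ) * lam p.1 ^ ((j:ℕ) - (p.2:ℕ)) with hV
  set M : Matrix ((i : Fin d) × Fin (m i)) ((i : Fin d) × Fin (m i)) ℂ :=
    Matrix.of fun p q => if p.1 = q.1 ∧ (p.2:ℕ)+(q.2:ℕ) < m p.1
      then ω p.1 ((p.2:ℕ)+(q.2:ℕ)) else 0 with hM
  have hsig : ∀ g : ((i : Fin d) × Fin (m i)) → ℂ,
      ∑ p, g p = ∑ i, ∑ a : Fin (m i), g ⟨i,a⟩ := by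
    intro g
    rw [← Finset.univ_sigma_univ, Finset.sum_sigma]
  -- factorization H = V * M * Vᵀ
  have hfact : H = V * M * Vᵀ := by
    ext j k
    rw [hH j k, hy]
    have expand : (V * M * Vᵀ) j k = ∑ p, (∑ q, V j p * M p q * V k q) := by
      rw [Matrix.mul_apply]
      simp only [Matrix.mul_apply, Matrix.transpose_apply, Finset.sum_mul]
      exact Finset.sum_comm
    rw [expand, hsig]
    refine Finset.sum_congr rfl fun i _ => ?_
    have inner : ∀ a : Fin (m i), (∑ q, V j ⟨i,a⟩ * M ⟨i,a⟩ q * V k q)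
        = ∑ b : Fin (m i), V j ⟨i,a⟩ * M ⟨i,a⟩ ⟨i,b⟩ * V k ⟨i,b⟩ := by
      intro a
      rw [hsig (fun q => V j ⟨i,a⟩ * M ⟨i,a⟩ q * V k q)]
      rw [Finset.sum_eq_single i]
      · intro i' _ hne
        refine Finset.sum_eq_zero fun b _ => ?_
        have : M ⟨i,a⟩ ⟨i',b⟩ = 0 := by
          rw [hM, Matrix.of_apply, if_neg]
          intro hcon
          exact hne hcon.1.symm
        rw [this, mul_zero, zero_mul]
      · intro hcon
        exact absurd (Finset.mem_univ i) hcon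
    rw [Finset.sum_congr rfl fun a _ => inner a]
    have hterm : ∀ (a b : Fin (m i)), V j ⟨i,a⟩ * M ⟨i,a⟩ ⟨i,b⟩ * V k ⟨i,b⟩
        = (if (a:ℕ)+(b:ℕ) < m i then ω i ((a:ℕ)+(b:ℕ)) else 0)
          * ((((j:ℕ).choose (a:ℕ) : ℕ) : ℂ) * lam i ^ ((j:ℕ)-(a:ℕ)))
          * ((((k:ℕ).choose (b:ℕ) : ℕ) : ℂ) * lam i ^ ((k:ℕ)-(b:ℕ))) := by
      intro a b
      simp only [hV, hM, Matrix.of_apply, true_and]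
      ring
    simp only [hterm]
    have hconv : ∀ (F : ℕ → ℕ → ℂ),
        (∑ a : Fin (m i), ∑ b : Fin (m i), F (a:ℕ) (b:ℕ))
          = ∑ a ∈ Finset.range (m i), ∑ b ∈ Finset.range (m i), F a b := by
      intro F
      rw [Fin.sum_univ_eq_sum_range (fun a => ∑ b : Fin (m i), F a (b:ℕ)) (m i)]
      exact Finset.sum_congr rfl fun a _ => Fin.sum_univ_eq_sum_range (F a) (m i)
    rw [hconv (fun a b => (if a+b < m i then ω i (a+b) else 0)
        * (((j:ℕ).choose a : ℂ) * lam i ^ ((j:ℕ)-a))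
        * (((k:ℕ).choose b : ℂ) * lam i ^ ((k:ℕ)-b)))]
    exact hk_entry (m i) (ω i) (lam i) (j:ℕ) (k:ℕ)
  -- M is injective
  have hMinj : Function.Injective M.mulVecLin := by
    rw [← LinearMap.ker_eq_bot, LinearMap.ker_eq_bot']
    intro x hx
    funext p
    obtain ⟨i, b⟩ := p
    have hBunit : IsUnit (Matrix.of fun a b : Fin (m i) =>
        if (a:ℕ)+(b:ℕ) < m i then ω i ((a:ℕ)+(b:ℕ)) else 0) :=
      (Matrix.isUnit_iff_isUnit_det _).mpr
        (isUnit_iff_ne_zero.mpr (hk_block_det (m i) (ω i) (hω i)))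
    have hxi : (Matrix.of fun a b : Fin (m i) =>
        if (a:ℕ)+(b:ℕ) < m i then ω i ((a:ℕ)+(b:ℕ)) else 0).mulVec (fun b => x ⟨i,b⟩) = 0 := by
      funext a
      have h0 : M.mulVecLin x ⟨i,a⟩ = 0 := by rw [hx]; rfl
      rw [Matrix.mulVecLin_apply] at h0
      have hexp : M.mulVec x ⟨i,a⟩ = ∑ p, M ⟨i,a⟩ p * x p := by
        simp [Matrix.mulVec, dotProduct]
      rw [hexp, hsig (fun p => M ⟨i,a⟩ p * x p), Finset.sum_eq_single i] at h0
      · refine Eq.trans ?_ h0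
        simp [Matrix.mulVec, dotProduct, hM]
      · intro i' _ hne
        refine Finset.sum_eq_zero fun b _ => ?_
        have : M ⟨i,a⟩ ⟨i',b⟩ = 0 := by
          rw [hM, Matrix.of_apply, if_neg]
          intro hcon
          exact hne hcon.1.symm
        rw [this, zero_mul]
      · intro hcon
        exact absurd (Finset.mem_univ i) hcon
    have hinj := Matrix.mulVec_injective_iff_isUnit.mpr hBunit
    have : (fun b => x ⟨i,b⟩) = 0 := by
      apply hinj
      rw [hxi, Matrix.mulVec_zero]
    exact congrFun this b
  -- V is injective
  have hVinj : Function.Injective V.mulVecLin := by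
    rw [← LinearMap.ker_eq_bot, LinearMap.ker_eq_bot']
    intro x hx
    set c : Fin d → ℕ → ℂ := fun i a => if h : a < m i then x ⟨i, ⟨a, h⟩⟩ else 0 with hc
    have hwin : ∀ k < n, ∑ i, ∑ a ∈ Finset.range (m i), c i a * hkF (lam i) a k = 0 := by
      intro k hk
      have h0 : V.mulVecLin x ⟨k, hk⟩ = 0 := by rw [hx]; rfl
      rw [Matrix.mulVecLin_apply] at h0
      have hexp : V.mulVec x ⟨k, hk⟩ = ∑ p, V ⟨k,hk⟩ p * x p := by
        simp [Matrix.mulVec, dotProduct]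
      rw [hexp, hsig (fun p => V ⟨k,hk⟩ p * x p)] at h0
      rw [← h0]
      refine Finset.sum_congr rfl fun i _ => ?_
      rw [← Fin.sum_univ_eq_sum_range (fun a => c i a * hkF (lam i) a k) (m i)]
      refine Finset.sum_congr rfl fun a _ => ?_
      have hca : c i (a:ℕ) = x ⟨i,a⟩ := by
        simp [hc, a.isLt]
      rw [hca]
      have hFv : hkF (lam i) (a:ℕ) k = V ⟨k,hk⟩ ⟨i,a⟩ := rfl
      rw [hFv, mul_comm]
    have hall := hk_indep lam hlam (∑ i, m i) m rfl c n hn hwin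
    funext p
    obtain ⟨i, a⟩ := p
    have := hall i (a:ℕ) a.isLt
    simpa [hc, a.isLt] using this
  -- rank computation
  have hcard : Fintype.card ((i : Fin d) × Fin (m i)) = ∑ i, m i := by
    simp
  have hVMinj : Function.Injective (V * M).mulVecLin := by
    rw [Matrix.mulVecLin_mul, LinearMap.coe_comp]
    exact hVinj.comp hMinj
  have h1 : H.rank = Vᵀ.rank := by
    rw [hfact]
    rw [Matrix.rank, Matrix.rank, Matrix.mulVecLin_mul, LinearMap.range_comp]
    exact (Submodule.equivMapOfInjective _ hVMinj _).finrank_eq.symm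
  rw [h1, Matrix.rank_transpose, Matrix.rank, LinearMap.finrank_range_of_inj hVinj,
    Module.finrank_fintype_fun_eq_card, hcard]
end

section
/- Let d ≥ 1, let λ : Fin d → ℂ be pairwise distinct (injective), let m : Fin d → ℕ satisfy m i ≥ 1 for every i, let weights ω i s ∈ ℂ be given for s ∈ {0, …, m i − 1} with ω i (m i − 1) ≠ 0 for every i, and define y : ℕ → ℂ by y(k) = ∑_{i} ∑_{s=0}^{m i − 1} ω i s · (k.choose s) · (λ i)^{k − s}. Let r = ∑_{i} m i. Suppose α : Fin r → ℂ satisfies ∑_{j=0}^{r−1} α j · y(k + j) = − y(k + r) for every k ∈ {0, …, r−1}. Then X^r + ∑_{j=0}^{r−1} (α j) · X^j = ∏_{i} (X − C(λ i))^{m i} in ℂ[X]; in particular, each λ i is a root of this polynomial of multiplicity exactly m i. -/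
open Finset Polynomial

noncomputable section HankelAux
namespace HankelAux

def Sh : Module.End ℂ (ℕ → ℂ) where
  toFun y := fun k => y (k + 1)
  map_add' _ _ := rfl
  map_smul' _ _ := rfl

def U (l : ℂ) (s : ℕ) : ℕ → ℂ := fun k => (k.choose s : ℂ) * l ^ (k - s)

lemma Sh_apply (y : ℕ → ℂ) (k : ℕ) : Sh y k = y (k + 1) := rfl

lemma Sh_pow_apply (n : ℕ) (y : ℕ → ℂ) (k : ℕ) : (Sh ^ n) y k = y (k + n) := by
  induction n generalizing y k with
  | zero => rfl
  | succ n ih =>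
    rw [pow_succ, Module.End.mul_apply, ih]
    rfl

lemma aeval_apply (f : ℂ[X]) (N : ℕ) (hN : f.natDegree < N) (y : ℕ → ℂ) (k : ℕ) :
    (aeval Sh f) y k = ∑ t ∈ range N, f.coeff t * y (k + t) := by
  rw [Polynomial.aeval_eq_sum_range' hN]
  simp [LinearMap.sum_apply, Finset.sum_apply, Sh_pow_apply, smul_eq_mul]

lemma aeval_X_sub_C_apply (l : ℂ) (u : ℕ → ℂ) (k : ℕ) :
    (aeval Sh (X - C l)) u k = u (k + 1) - l * u k := by
  simp [map_sub, aeval_X, aeval_C, Algebra.algebraMap_eq_smul_one, Sh_apply]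

lemma step0 (l : ℂ) : (aeval Sh (X - C l)) (U l 0) = 0 := by
  funext k
  rw [aeval_X_sub_C_apply]
  simp [U, pow_succ]
  ring

lemma step (l : ℂ) (s : ℕ) : (aeval Sh (X - C l)) (U l (s + 1)) = U l s := by
  funext k
  rw [aeval_X_sub_C_apply]
  show (((k+1).choose (s+1) : ℂ) * l ^ (k + 1 - (s+1))) - l * ((k.choose (s+1) : ℂ) * l ^ (k - (s+1))) = (k.choose s : ℂ) * l ^ (k - s)
  rcases lt_trichotomy k s with h | h | h
  · rw [Nat.choose_eq_zero_of_lt (by omega), Nat.choose_eq_zero_of_lt (by omega),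
      Nat.choose_eq_zero_of_lt (by omega)]
    ring
  · subst h
    simp [Nat.choose_self, Nat.choose_succ_self]
  · have h1 : k + 1 - (s+1) = k - s := by omega
    have h2 : k - s = (k - (s+1)) + 1 := by omega
    rw [h1, Nat.choose_succ_succ', h2]
    push_cast
    ring

lemma pow_step (l : ℂ) (e s : ℕ) : (aeval Sh ((X - C l) ^ e)) (U l (s + e)) = U l s := by
  induction e generalizing s with
  | zero => simp
  | succ e ih =>
    rw [pow_succ, map_mul, Module.End.mul_apply]
    have : s + (e + 1) = (s + e) + 1 := by omega
    rw [this, step, ih]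

lemma kill (l : ℂ) (s e : ℕ) (h : s < e) : (aeval Sh ((X - C l) ^ e)) (U l s) = 0 := by
  have he : e = (e - (s+1)) + (s + 1) := by omega
  rw [he, pow_add, map_mul, Module.End.mul_apply]
  have : (aeval Sh ((X - C l) ^ (s + 1))) (U l s) = 0 := by
    rw [pow_succ', map_mul, Module.End.mul_apply]
    have h0 : (aeval Sh ((X - C l) ^ s)) (U l s) = U l 0 := by
      simpa using pow_step l s 0
    rw [h0, step0]
  rw [this, map_zero]

lemma K (f : ℂ[X]) (l : ℂ) (mm : ℕ) (w : ℕ → ℂ) :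
    (aeval Sh (f * (X - C l) ^ mm)) (∑ s ∈ range mm, w s • U l s) = 0 := by
  rw [map_mul, Module.End.mul_apply]
  have : (aeval Sh ((X - C l) ^ mm)) (∑ s ∈ range mm, w s • U l s) = 0 := by
    rw [map_sum]
    refine Finset.sum_eq_zero fun s hs => ?_
    rw [map_smul, kill l s mm (mem_range.mp hs), smul_zero]
  rw [this, map_zero]

lemma aeval_U0 (f : ℂ[X]) (l : ℂ) : (aeval Sh f) (U l 0) 0 = f.eval l := by
  rw [aeval_apply f (f.natDegree + 1) (lt_add_one _) _ 0, Polynomial.eval_eq_sum_range]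
  refine Finset.sum_congr rfl fun t _ => ?_
  simp [U]

lemma ext_zero (q : ℂ[X]) (r : ℕ) (hq : q.Monic) (hdeg : q.natDegree = r)
    (z : ℕ → ℂ) (hz : (aeval Sh q) z = 0) (h0 : ∀ k < r, z k = 0) : z = 0 := by
  have key : ∀ n, z n = 0 := by
    intro n
    induction n using Nat.strong_induction_on with
    | _ n ih =>
      by_cases hn : n < r
      · exact h0 n hn
      · have hz' : (aeval Sh q) z (n - r) = 0 := by rw [hz]; rfl
        rw [aeval_apply q (r + 1) (by omega) z (n - r), Finset.sum_range_succ] at hz'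
        have hc : q.coeff r = 1 := by
          rw [← hdeg]; exact hq.coeff_natDegree
        have hsum : ∑ t ∈ range r, q.coeff t * z (n - r + t) = 0 := by
          refine Finset.sum_eq_zero fun t ht => ?_
          rw [ih (n - r + t) (by simp at ht; omega), mul_zero]
        have hnr : n - r + r = n := by omega
        rw [hsum, hc, one_mul, hnr, zero_add] at hz'
        exact hz'
  funext n
  exact key n

end HankelAux

open HankelAux


theorem hankel_system_recovers_polynomial_with_multiplicities
    (d : ℕ) (hd : 1 ≤ d)
    (lam : Fin d → ℂ) (hlam : Function.Injective lam)
    (m : Fin d → ℕ) (hm : ∀ i, 1 ≤ m i)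
    (ω : Fin d → ℕ → ℂ) (hω : ∀ i, ω i (m i - 1) ≠ 0)
    (y : ℕ → ℂ)
    (hy : ∀ k, y k = ∑ i, ∑ s ∈ Finset.range (m i),
      ω i s * (k.choose s : ℂ) * lam i ^ (k - s))
    (r : ℕ) (hr : r = ∑ i, m i)
    (α : Fin r → ℂ)
    (hα : ∀ k < r, ∑ j : Fin r, α j * y (k + (j : ℕ)) = - y (k + r)) :
    (X ^ r + ∑ j : Fin r, C (α j) * X ^ (j : ℕ)) = ∏ i, (X - C (lam i)) ^ m i := by
  classical
  set p : ℂ[X] := X ^ r + ∑ j : Fin r, C (α j) * X ^ (j : ℕ) with hp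
  set q : ℂ[X] := ∏ i, (X - C (lam i)) ^ m i with hq
  have hmon : ∀ i ∈ (univ : Finset (Fin d)), ((X - C (lam i)) ^ m i).Monic :=
    fun i _ => (monic_X_sub_C _).pow _
  have hqm : q.Monic := monic_prod_of_monic _ _ hmon
  have hqdeg : q.natDegree = r := by
    rw [hq, natDegree_prod_of_monic _ _ hmon, hr]
    simp [natDegree_pow, natDegree_X_sub_C]
  -- p is monic of degree r
  have hpm : p.Monic := by
    rw [hp]
    exact (monic_X_pow r).add_of_left (by rw [degree_X_pow]; exact degree_sum_fin_lt α)
  have hpdegree : p.degree = r := by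
    rw [hp, degree_add_eq_left_of_degree_lt (by rw [degree_X_pow]; exact degree_sum_fin_lt α),
      degree_X_pow]
  have hpdeg : p.natDegree = r := natDegree_eq_of_degree_eq_some hpdegree
  -- coefficients of p
  have hpc : ∀ (t : ℕ) (ht : t < r), p.coeff t = α ⟨t, ht⟩ := by
    intro t ht
    rw [hp, coeff_add, coeff_X_pow, if_neg (by omega), finset_sum_coeff]
    rw [Finset.sum_eq_single (⟨t, ht⟩ : Fin r)]
    · simp
    · intro j _ hj
      rw [coeff_C_mul, coeff_X_pow, if_neg (fun h => hj (by apply Fin.ext; simp [h]))]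
      ring
    · simp
  have hpr : p.coeff r = 1 := by
    have := hpm.coeff_natDegree
    rwa [hpdeg] at this
  -- decomposition of y
  set Y : Fin d → (ℕ → ℂ) := fun i => ∑ s ∈ range (m i), ω i s • U (lam i) s with hY
  have hyY : y = ∑ i, Y i := by
    funext k
    rw [hy k, Finset.sum_apply]
    refine Finset.sum_congr rfl fun i _ => ?_
    simp only [hY, Finset.sum_apply, Pi.smul_apply, smul_eq_mul, U, mul_assoc]
  -- q annihilates y
  have hqy : (aeval Sh q) y = 0 := by
    rw [hyY, map_sum]
    refine Finset.sum_eq_zero fun i _ => ?_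
    have hfac : q = (∏ i' ∈ univ.erase i, (X - C (lam i')) ^ m i') * (X - C (lam i)) ^ m i := by
      rw [hq, ← Finset.prod_erase_mul univ _ (mem_univ i)]
    rw [hfac, hY]
    exact K _ _ _ _
  -- p annihilates y on the first r values
  have hαp : ∀ k < r, (aeval Sh p) y k = 0 := by
    intro k hk
    rw [aeval_apply p (r + 1) (by omega) y k, Finset.sum_range_succ, hpr, one_mul]
    have hs : ∑ t ∈ range r, p.coeff t * y (k + t) = ∑ j : Fin r, α j * y (k + (j : ℕ)) := by
      rw [← Fin.sum_univ_eq_sum_range (fun t => p.coeff t * y (k + t)) r]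
      refine Finset.sum_congr rfl fun j _ => ?_
      rw [hpc (j : ℕ) j.isLt]
    rw [hs, hα k hk, neg_add_cancel]
  -- h := p - q annihilates y
  set h : ℂ[X] := p - q with hh
  have hph : (aeval Sh h) y = 0 := by
    have h1 : ∀ k < r, (aeval Sh h) y k = 0 := by
      intro k hk
      rw [hh, map_sub, LinearMap.sub_apply]
      have : (aeval Sh q) y k = 0 := by rw [hqy]; rfl
      simp [Pi.sub_apply, hαp k hk, this]
    have h2 : (aeval Sh q) ((aeval Sh h) y) = 0 := by
      rw [← Module.End.mul_apply, ← map_mul, mul_comm, map_mul, Module.End.mul_apply, hqy,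
        map_zero]
    exact ext_zero q r hqm hqdeg _ h2 h1
  by_cases hzero : h = 0
  · exact sub_eq_zero.mp hzero
  exfalso
  have hhdeg : h.natDegree < r := by
    have hd1 : h.degree < p.degree :=
      degree_sub_lt (by rw [hpdegree, degree_eq_natDegree hqm.ne_zero, hqdeg]) hpm.ne_zero
        (hpm.leadingCoeff.trans hqm.leadingCoeff.symm)
    rw [hpdegree] at hd1
    exact (natDegree_lt_iff_degree_lt hzero).mpr hd1
  -- the annihilator ideal
  let I : Ideal ℂ[X] :=
    { carrier := {f | (aeval Sh f) y = 0}
      add_mem' := by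
        intro a b ha hb
        simp only [Set.mem_setOf_eq, map_add, LinearMap.add_apply] at *
        rw [ha, hb, add_zero]
      zero_mem' := by simp
      smul_mem' := by
        intro c f hf
        simp only [Set.mem_setOf_eq, smul_eq_mul] at *
        rw [map_mul, Module.End.mul_apply, hf, map_zero] }
  have hqI : q ∈ I := hqy
  have hhI : h ∈ I := hph
  obtain ⟨g, hg⟩ := (IsPrincipalIdealRing.principal I).principal
  rw [hg] at hqI hhI
  have hgq : g ∣ q := Ideal.mem_span_singleton.mp hqI
  have hgh : g ∣ h := Ideal.mem_span_singleton.mp hhI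
  have hg0 : g ≠ 0 := by
    rintro rfl
    exact hzero (zero_dvd_iff.mp hgh)
  have hgdeg : g.natDegree < r :=
    lt_of_le_of_lt (natDegree_le_of_dvd hgh hzero) hhdeg
  obtain ⟨w, hw⟩ := hgq
  have hw0 : w ≠ 0 := by
    rintro rfl
    exact hqm.ne_zero (by rw [hw, mul_zero])
  have hwdeg : 0 < w.degree := by
    have hnd : q.natDegree = g.natDegree + w.natDegree := by rw [hw, natDegree_mul hg0 hw0]
    have : 0 < w.natDegree := by omega
    exact natDegree_pos_iff_degree_pos.mp this
  obtain ⟨μ, hμ⟩ := Complex.exists_root hwdeg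
  have hμq : q.eval μ = 0 := by
    rw [hw, eval_mul, show eval μ w = 0 from hμ, mul_zero]
  obtain ⟨j, hj⟩ : ∃ j, μ = lam j := by
    rw [hq, eval_prod] at hμq
    obtain ⟨j, -, hj⟩ := Finset.prod_eq_zero_iff.mp hμq
    rw [eval_pow, eval_sub, eval_X, eval_C, pow_eq_zero_iff (by have := hm j; omega)] at hj
    exact ⟨j, by linear_combination hj⟩
  have hdvd : (X - C (lam j)) ∣ w := dvd_iff_isRoot.mpr (by rw [← hj]; exact hμ)
  obtain ⟨w', hw'⟩ := hdvd
  set qj : ℂ[X] := (∏ i ∈ univ.erase j, (X - C (lam i)) ^ m i) * (X - C (lam j)) ^ (m j - 1)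
    with hqj
  have hfac : qj * (X - C (lam j)) = q := by
    rw [hqj, hq, mul_assoc, ← pow_succ]
    have hmj : m j - 1 + 1 = m j := by have := hm j; omega
    rw [hmj, Finset.prod_erase_mul univ _ (mem_univ j)]
  have hgqj : g ∣ qj := by
    refine ⟨w', mul_right_cancel₀ (X_sub_C_ne_zero (lam j)) ?_⟩
    rw [hfac, hw, hw']
    ring
  have hqjy : (aeval Sh qj) y = 0 := by
    have : qj ∈ I := by rw [hg]; exact Ideal.mem_span_singleton.mpr hgqj
    exact this
  -- compute (aeval Sh qj) y at 0
  have hcompute : (aeval Sh qj) y 0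
      = ω j (m j - 1) * ∏ i ∈ univ.erase j, (lam j - lam i) ^ m i := by
    rw [hyY, map_sum, Finset.sum_apply]
    rw [Finset.sum_eq_single j]
    · -- the j-term
      have hinner : (aeval Sh ((X - C (lam j)) ^ (m j - 1))) (Y j)
          = ω j (m j - 1) • U (lam j) 0 := by
        rw [hY]
        simp only
        rw [map_sum, Finset.sum_eq_single (m j - 1)]
        · rw [map_smul]
          congr 1
          simpa using pow_step (lam j) (m j - 1) 0
        · intro s hs hne
          rw [map_smul, kill _ s _ (by rw [mem_range] at hs; omega), smul_zero]
        · intro habs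
          exact absurd (mem_range.mpr (by have := hm j; omega)) habs
      rw [hqj, map_mul, Module.End.mul_apply, hinner, map_smul, Pi.smul_apply, smul_eq_mul,
        aeval_U0]
      rw [eval_prod]
      congr 1
      refine Finset.prod_congr rfl fun i _ => ?_
      rw [eval_pow, eval_sub, eval_X, eval_C]
    · intro i _ hij
      have hfac2 : qj = ((∏ i' ∈ (univ.erase j).erase i, (X - C (lam i')) ^ m i')
          * (X - C (lam j)) ^ (m j - 1)) * (X - C (lam i)) ^ m i := by
        rw [hqj, ← Finset.prod_erase_mul (univ.erase j) _
          (Finset.mem_erase.mpr ⟨hij, mem_univ i⟩)]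
        ring
      rw [hfac2, hY]
      simp only
      rw [K]
      rfl
    · intro habs
      exact absurd (mem_univ j) habs
  rw [hqjy] at hcompute
  have hzero2 : ω j (m j - 1) * ∏ i ∈ univ.erase j, (lam j - lam i) ^ m i = 0 :=
    hcompute.symm
  rcases mul_eq_zero.mp hzero2 with h1 | h2
  · exact hω j h1
  · obtain ⟨i, hi, h3⟩ := Finset.prod_eq_zero_iff.mp h2
    rw [pow_eq_zero_iff (by have := hm i; omega), sub_eq_zero] at h3
    exact (Finset.mem_erase.mp hi).1 (hlam h3).symm
end HankelAux
end

section
/- Let n ≥ 1, let λ ∈ ℂ, and let s ∈ ℕ with s < n. Define the n×n complex matrix D by D j k = ((j + k).choose s) · λ^{(j + k) − s} for j, k ∈ Fin n (natural-number subtraction in the exponent; the entry vanishes when j + k < s since the binomial coefficient is 0). Then the rank of D equals s + 1. -/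
theorem rank_of_derivative_hankel_matrix
    (n : ℕ) (hn : 1 ≤ n) (lam : ℂ) (s : ℕ) (hs : s < n)
    (D : Matrix (Fin n) (Fin n) ℂ)
    (hD : ∀ j k : Fin n,
      D j k = (((j : ℕ) + (k : ℕ)).choose s : ℂ) * lam ^ (((j : ℕ) + (k : ℕ)) - s)) :
    D.rank = s + 1 := by
  have hsn : s + 1 ≤ n := hs
  -- the factors
  set A : Matrix (Fin n) (Fin (s + 1)) ℂ :=
    fun j i => ((j : ℕ).choose (i : ℕ) : ℂ) * lam ^ ((j : ℕ) - (i : ℕ)) with hA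
  set B : Matrix (Fin (s + 1)) (Fin n) ℂ :=
    fun i k => ((k : ℕ).choose (s - (i : ℕ)) : ℂ) * lam ^ ((k : ℕ) - (s - (i : ℕ))) with hB
  -- key pointwise identity for each term of the product
  have term : ∀ j k i : ℕ, i ≤ s →
      ((j.choose i : ℂ) * lam ^ (j - i)) * ((k.choose (s - i) : ℂ) * lam ^ (k - (s - i)))
        = ((j.choose i * k.choose (s - i) : ℕ) : ℂ) * lam ^ (j + k - s) := by
    intro j k i hi
    by_cases hji : i ≤ j
    · by_cases hki : s - i ≤ k
      · have hexp : (j - i) + (k - (s - i)) = j + k - s := by omega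
        rw [← hexp, pow_add]
        push_cast
        ring
      · have : k.choose (s - i) = 0 := Nat.choose_eq_zero_of_lt (by omega)
        simp [this]
    · have : j.choose i = 0 := Nat.choose_eq_zero_of_lt (by omega)
      simp [this]
  -- factorization D = A * B
  have hfac : D = A * B := by
    ext j k
    rw [hD, Matrix.mul_apply]
    have hsum : ∑ i : Fin (s + 1), A j i * B i k
        = ∑ i : Fin (s + 1),
            (((j : ℕ).choose (i : ℕ) * (k : ℕ).choose (s - (i : ℕ)) : ℕ) : ℂ)
              * lam ^ ((j : ℕ) + (k : ℕ) - s) := by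
      refine Finset.sum_congr rfl fun i _ => ?_
      exact term _ _ _ (Nat.lt_succ_iff.mp i.isLt)
    rw [hsum, ← Finset.sum_mul, Fin.sum_univ_eq_sum_range
      (fun i => (((j : ℕ).choose i * (k : ℕ).choose (s - i) : ℕ) : ℂ))]
    rw [Nat.add_choose_eq (j : ℕ) (k : ℕ) s,
      Finset.Nat.sum_antidiagonal_eq_sum_range_succ (fun a b => (j : ℕ).choose a * (k : ℕ).choose b) s]
    push_cast
    ring
  -- upper bound
  have hub : D.rank ≤ s + 1 := by
    rw [hfac]
    calc (A * B).rank ≤ A.rank := Matrix.rank_mul_le_left A B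
      _ ≤ Fintype.card (Fin (s + 1)) := Matrix.rank_le_card_width A
      _ = s + 1 := by simp
  -- carve out the top-left (s+1) × (s+1) submatrix
  set f : Fin (s + 1) → Fin n := Fin.castLE hsn with hf
  set M : Matrix (Fin (s + 1)) (Fin (s + 1)) ℂ := D.submatrix f f with hM
  -- M as a product P * D * Q
  set P : Matrix (Fin (s + 1)) (Fin n) ℂ := fun i j => if j = f i then 1 else 0 with hP
  set Q : Matrix (Fin n) (Fin (s + 1)) ℂ := fun j k => if j = f k then 1 else 0 with hQ
  have hMPQ : M = P * (D * Q) := by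
    ext i k
    rw [Matrix.mul_apply]
    have : ∀ j : Fin n, P i j * (D * Q) j k = if j = f i then (D * Q) j k else 0 := by
      intro j; rw [hP]; by_cases h : j = f i <;> simp [h]
    rw [Finset.sum_congr rfl fun j _ => this j, Finset.sum_ite_eq' _ (f i)]
    simp only [Finset.mem_univ, if_true]
    rw [Matrix.mul_apply]
    have : ∀ j : Fin n, D (f i) j * Q j k = if j = f k then D (f i) j else 0 := by
      intro j; rw [hQ]; by_cases h : j = f k <;> simp [h]
    rw [Finset.sum_congr rfl fun j _ => this j, Finset.sum_ite_eq' _ (f k)]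
    simp [hM]
  have hMrank : M.rank ≤ D.rank := by
    rw [hMPQ]
    calc (P * (D * Q)).rank ≤ (D * Q).rank := Matrix.rank_mul_le_right P (D * Q)
      _ ≤ D.rank := Matrix.rank_mul_le_left D Q
  -- det of the column-reversed submatrix
  have hval : ∀ i : Fin (s + 1), ((Fin.rev i : Fin (s + 1)) : ℕ) = s - (i : ℕ) := by
    intro i; simp [Fin.val_rev]
  have hN : (M.submatrix id ⇑(Fin.revPerm : Equiv.Perm (Fin (s + 1)))).det = 1 := by
    have htri : (M.submatrix id ⇑(Fin.revPerm : Equiv.Perm (Fin (s + 1)))).BlockTriangular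
        OrderDual.toDual := by
      intro i j hij
      have hij' : (i : ℕ) < (j : ℕ) := hij
      simp only [Matrix.submatrix_apply, id_eq, Fin.revPerm_apply, hM]
      rw [hD]
      have h1 : ((f i : ℕ) + (f (Fin.rev j) : ℕ)).choose s = 0 := by
        apply Nat.choose_eq_zero_of_lt
        have : (f (Fin.rev j) : ℕ) = s - (j : ℕ) := by
          simp [hf, Fin.coe_castLE, hval]
        have h2 : (f i : ℕ) = (i : ℕ) := by simp [hf]
        omega
      simp [h1]
    rw [Matrix.det_of_lowerTriangular _ htri]
    have hdiag : ∀ i : Fin (s + 1),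
        (M.submatrix id ⇑(Fin.revPerm : Equiv.Perm (Fin (s + 1)))) i i = 1 := by
      intro i
      simp only [Matrix.submatrix_apply, id_eq, Fin.revPerm_apply, hM]
      rw [hD]
      have h2 : (f i : ℕ) = (i : ℕ) := by simp [hf]
      have h3 : (f (Fin.rev i) : ℕ) = s - (i : ℕ) := by simp [hf, Fin.coe_castLE, hval]
      have h4 : (f i : ℕ) + (f (Fin.rev i) : ℕ) = s := by omega
      rw [h4]
      simp
    rw [Finset.prod_congr rfl fun i _ => hdiag i]
    simp
  have hdet : M.det ≠ 0 := by
    intro h0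
    have := Matrix.det_permute' (Fin.revPerm : Equiv.Perm (Fin (s + 1))) M
    rw [hN, h0, mul_zero] at this
    exact one_ne_zero this
  have hMunit : IsUnit M := by
    rw [Matrix.isUnit_iff_isUnit_det]
    exact isUnit_iff_ne_zero.mpr hdet
  have hlb : s + 1 ≤ D.rank := by
    have := Matrix.rank_of_isUnit M hMunit
    rw [Fintype.card_fin] at this
    omega
  omega
end

section
/- Let n ≥ 1, let λ ∈ ℂ, and let s', s ∈ ℕ with s' ≤ s < n. For each t ∈ ℕ define the n×n complex matrix D^{(t)} by D^{(t)} j k = ((j + k).choose t) · λ^{(j + k) − t} (natural-number subtraction in the exponent). Then the column space of D^{(s')} is contained in the column space of D^{(s)}; that is, the span of the columns of D^{(s')} (equivalently, the range of the linear map x ↦ D^{(s')} x on ℂ^n) is a subspace of the span of the columns of D^{(s)}. -/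
open Finset

lemma vandermonde_term_hankel (lam : ℂ) (t j k : ℕ) :
    ((j+k).choose t : ℂ) * lam ^ (j+k-t) =
      ∑ i ∈ Finset.range (t+1),
        ((k.choose (t-i) : ℂ) * lam ^ (k-(t-i))) * ((j.choose i : ℂ) * lam ^ (j-i)) := by
  rw [Nat.add_choose_eq, Finset.Nat.sum_antidiagonal_eq_sum_range_succ_mk]
  push_cast
  rw [Finset.sum_mul]
  refine Finset.sum_congr rfl ?_
  intro i hi
  simp only [Finset.mem_range, Nat.lt_succ_iff] at hi
  by_cases hij : i ≤ j
  · by_cases hk : t - i ≤ k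
    · have : j + k - t = (j - i) + (k - (t - i)) := by omega
      rw [this, pow_add]; ring
    · rw [Nat.choose_eq_zero_of_lt (show k < t - i by omega)]
      push_cast; ring
  · rw [Nat.choose_eq_zero_of_lt (by omega)]
    push_cast; ring

theorem range_derivative_hankel_monotone
    (n : ℕ) (hn : 1 ≤ n) (lam : ℂ) (s' s : ℕ) (hs' : s' ≤ s) (hs : s < n)
    (D : ℕ → Matrix (Fin n) (Fin n) ℂ)
    (hD : ∀ t : ℕ, ∀ j k : Fin n,
      D t j k = (((j : ℕ) + (k : ℕ)).choose t : ℂ) * lam ^ (((j : ℕ) + (k : ℕ)) - t)) :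
    LinearMap.range (D s').mulVecLin ≤ LinearMap.range (D s).mulVecLin := by
  set u : ℕ → Fin n → ℂ := fun i j => ((j:ℕ).choose i : ℂ) * lam ^ ((j:ℕ) - i) with hu
  have hcol : ∀ t : ℕ, ∀ k : Fin n,
      (fun j => D t j k) = ∑ i ∈ Finset.range (t+1),
        (((k:ℕ).choose (t-i) : ℂ) * lam ^ ((k:ℕ)-(t-i))) • u i := by
    intro t k
    funext j
    simp only [Finset.sum_apply, Pi.smul_apply, smul_eq_mul, hu]
    rw [hD t j k]
    exact vandermonde_term_hankel lam t j k
  have hcolmem : ∀ t, ∀ k : Fin n, (fun j => D t j k) ∈ LinearMap.range (D t).mulVecLin := by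
    intro t k
    exact ⟨Pi.single k 1, by
      ext j; simp [Matrix.mulVecLin_apply, Matrix.mulVec_single]⟩
  have hmem : ∀ m, m ≤ s → u (s - m) ∈ LinearMap.range (D s).mulVecLin := by
    intro m
    induction m using Nat.strong_induction_on with
    | _ m ih =>
      intro hm
      set k : Fin n := ⟨m, lt_of_le_of_lt hm hs⟩ with hkdef
      have hk : (k : ℕ) = m := rfl
      have hsm : s - m ∈ Finset.range (s+1) := by simp only [Finset.mem_range]; omega
      have hsplit : (fun j => D s j k)
          = u (s-m) + ∑ i ∈ (Finset.range (s+1)).erase (s-m),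
              (((k:ℕ).choose (s-i) : ℂ) * lam ^ ((k:ℕ)-(s-i))) • u i := by
        rw [hcol s k, ← Finset.add_sum_erase _ _ hsm]
        congr 1
        have h1 : s - (s - m) = m := by omega
        rw [hk, h1]
        simp [Nat.choose_self]
      have hsum : ∑ i ∈ (Finset.range (s+1)).erase (s-m),
              (((k:ℕ).choose (s-i) : ℂ) * lam ^ ((k:ℕ)-(s-i))) • u i
            ∈ LinearMap.range (D s).mulVecLin := by
        apply Submodule.sum_mem
        intro i hi
        simp only [Finset.mem_erase, Finset.mem_range, Nat.lt_succ_iff] at hi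
        by_cases hgt : s - m < i
        · apply Submodule.smul_mem
          have h2 : u i = u (s - (s - i)) := by rw [Nat.sub_sub_self hi.2]
          rw [h2]
          exact ih (s - i) (by omega) (by omega)
        · have hz : (k:ℕ).choose (s - i) = 0 := by
            rw [hk]
            exact Nat.choose_eq_zero_of_lt (by omega)
          rw [hz]
          simp
      have heq : u (s - m) = (fun j => D s j k) - ∑ i ∈ (Finset.range (s+1)).erase (s-m),
              (((k:ℕ).choose (s-i) : ℂ) * lam ^ ((k:ℕ)-(s-i))) • u i := by
        rw [hsplit]; abel
      rw [heq]
      exact Submodule.sub_mem _ (hcolmem s k) hsum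
  rintro x ⟨v, rfl⟩
  have hexp : (D s').mulVecLin v = ∑ k : Fin n, v k • (fun j => D s' j k) := by
    ext j
    simp [Matrix.mulVecLin_apply, Matrix.mulVec, dotProduct, mul_comm]
  rw [hexp]
  apply Submodule.sum_mem
  intro k _
  apply Submodule.smul_mem
  rw [hcol s' k]
  apply Submodule.sum_mem
  intro i hi
  simp only [Finset.mem_range, Nat.lt_succ_iff] at hi
  apply Submodule.smul_mem
  have h3 : u i = u (s - (s - i)) := by rw [Nat.sub_sub_self (le_trans (le_trans hi hs') (le_refl s))]
  rw [h3]
  exact hmem (s - i) (by omega)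
end

section
/- Let n ≥ 1, let G be an n×n complex matrix, let c, x₀ ∈ ℂ^n, and define y : ℕ → ℂ by y(k) = c ⬝ᵥ (G^k *ᵥ x₀). Let H be the n×n Hankel matrix of y, with entries H j k = y(j + k). Then the rank of H is at most the degree of the minimal polynomial of G over ℂ: rank H ≤ (minpoly ℂ G).natDegree. -/
open Matrix
theorem hankel_rank_le_minpoly_degree
    (n : ℕ) (hn : 1 ≤ n)
    (G : Matrix (Fin n) (Fin n) ℂ) (c x₀ : Fin n → ℂ)
    (y : ℕ → ℂ) (hy : ∀ k, y k = c ⬝ᵥ ((G ^ k) *ᵥ x₀))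
    (H : Matrix (Fin n) (Fin n) ℂ)
    (hH : ∀ j k : Fin n, H j k = y ((j : ℕ) + (k : ℕ))) :
    H.rank ≤ (minpoly ℂ G).natDegree := by
  classical
  haveI : Nonempty (Fin n) := Fin.pos_iff_nonempty.mp hn
  set m : Polynomial ℂ := minpoly ℂ G with hm
  set d : ℕ := m.natDegree with hd
  have hint : IsIntegral ℂ G := Algebra.IsIntegral.isIntegral G
  have hmon : m.Monic := minpoly.monic hint
  have hdpos : 0 < d := minpoly.natDegree_pos hint
  have hm1 : m ≠ 1 := by
    intro h
    rw [h] at hd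
    simp [hd] at hdpos
  -- the linear map v ↦ (j ↦ c ⬝ᵥ (G^j *ᵥ v))
  let φ : (Fin n → ℂ) →ₗ[ℂ] (Fin n → ℂ) :=
    { toFun := fun v j => c ⬝ᵥ ((G ^ (j : ℕ)) *ᵥ v)
      map_add' := by
        intro v w; funext j; simp [Matrix.mulVec_add, dotProduct_add]
      map_smul' := by
        intro a v; funext j; simp [Matrix.mulVec_smul, dotProduct_smul] }
  let W : Submodule ℂ (Fin n → ℂ) :=
    Submodule.span ℂ (Set.range fun i : Fin d => (G ^ (i : ℕ)) *ᵥ x₀)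
  have hGk : ∀ k : ℕ, (G ^ k) *ᵥ x₀ ∈ W := by
    intro k
    have hr : (Polynomial.X ^ k %ₘ m).natDegree < d :=
      Polynomial.natDegree_modByMonic_lt _ hmon hm1
    have key : G ^ k = Polynomial.aeval G (Polynomial.X ^ k %ₘ m) := by
      have hdiv := Polynomial.modByMonic_add_div (Polynomial.X ^ k : Polynomial ℂ) m
      have := congrArg (Polynomial.aeval G) hdiv
      simpa [hm, map_add, _root_.map_mul, minpoly.aeval] using this.symm
    rw [key, Polynomial.aeval_eq_sum_range' hr]
    have hsum : (∑ i ∈ Finset.range d, (Polynomial.X ^ k %ₘ m).coeff i • G ^ i) *ᵥ x₀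
        = ∑ i ∈ Finset.range d, ((Polynomial.X ^ k %ₘ m).coeff i • G ^ i) *ᵥ x₀ := by
      funext j
      simp only [Matrix.mulVec, dotProduct, Finset.sum_apply, Matrix.sum_apply, Finset.sum_mul]
      exact Finset.sum_comm ..
    rw [hsum]
    refine Submodule.sum_mem _ ?_
    intro i hi
    rw [Matrix.smul_mulVec]
    refine Submodule.smul_mem _ _ (Submodule.subset_span ?_)
    exact ⟨⟨i, Finset.mem_range.mp hi⟩, rfl⟩
  have hcol : ∀ k : Fin n, Hᵀ k = φ ((G ^ (k : ℕ)) *ᵥ x₀) := by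
    intro k
    funext j
    show H j k = c ⬝ᵥ ((G ^ (j : ℕ)) *ᵥ ((G ^ (k : ℕ)) *ᵥ x₀))
    rw [hH j k, hy, pow_add, Matrix.mulVec_mulVec]
  have hspan : Submodule.span ℂ (Set.range Hᵀ) ≤ W.map φ := by
    rw [Submodule.span_le]
    rintro _ ⟨k, rfl⟩
    exact ⟨_, hGk k, (hcol k).symm⟩
  have h1 : H.rank = Module.finrank ℂ (Submodule.span ℂ (Set.range Hᵀ)) := by
    rw [Matrix.rank, Matrix.range_mulVecLin]
    rfl
  rw [h1]
  calc Module.finrank ℂ (Submodule.span ℂ (Set.range Hᵀ))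
      ≤ Module.finrank ℂ (W.map φ) := Submodule.finrank_mono hspan
    _ ≤ Module.finrank ℂ W := Submodule.finrank_map_le φ W
    _ ≤ d := by
        exact (finrank_range_le_card (R := ℂ)
          (fun i : Fin d => (G ^ (i : ℕ)) *ᵥ x₀)).trans (by simp)
end

section
/- Let A be a d×d complex matrix, G an n×n complex matrix, c, x₀ ∈ ℂ^n, and β, γ ∈ ℂ^d. Define the vector c ⊗ γ ∈ ℂ^{n·d}, indexed by Fin n × Fin d, by (c ⊗ γ)(i, j) = c i · γ j, and similarly x₀ ⊗ β. Define y : ℕ → ℂ by y(k) = (c ⊗ γ) ⬝ᵥ (((1ₙ ⊗ₖ A) + (G ⊗ₖ 1_d))^k *ᵥ (x₀ ⊗ β)). Then for every k ∈ ℕ, y(k) = ∑_{s=0}^{k} (k.choose s) · (c ⬝ᵥ (G^s *ᵥ x₀)) · (γ ⬝ᵥ (A^{k−s} *ᵥ β)). -/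
open Matrix Kronecker Finset

lemma kron_pow_left {n d : ℕ} (G : Matrix (Fin n) (Fin n) ℂ) (s : ℕ) :
    (G ⊗ₖ (1 : Matrix (Fin d) (Fin d) ℂ)) ^ s = (G ^ s) ⊗ₖ 1 := by
  induction s with
  | zero => simp [Matrix.one_kronecker_one]
  | succ s ih => rw [pow_succ, ih, ← Matrix.mul_kronecker_mul, one_mul, pow_succ]

lemma kron_pow_right {n d : ℕ} (A : Matrix (Fin d) (Fin d) ℂ) (s : ℕ) :
    ((1 : Matrix (Fin n) (Fin n) ℂ) ⊗ₖ A) ^ s = (1 : Matrix (Fin n) (Fin n) ℂ) ⊗ₖ (A ^ s) := by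
  induction s with
  | zero => simp [Matrix.one_kronecker_one]
  | succ s ih => rw [pow_succ, ih, ← Matrix.mul_kronecker_mul, one_mul, pow_succ]

lemma my_sum_mulVec {m α : Type*} [Fintype m] [CommRing α] {ι : Type*} (t : Finset ι)
    (M : ι → Matrix m m α) (v : m → α) :
    (∑ s ∈ t, M s) *ᵥ v = ∑ s ∈ t, (M s *ᵥ v) := by
  ext i
  simp only [Matrix.mulVec, dotProduct, Finset.sum_apply, Matrix.sum_apply,
    Finset.sum_mul]
  exact Finset.sum_comm

lemma my_dot_sum {m α : Type*} [Fintype m] [CommRing α] {ι : Type*} (t : Finset ι)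
    (u : m → α) (w : ι → m → α) :
    u ⬝ᵥ (∑ s ∈ t, w s) = ∑ s ∈ t, u ⬝ᵥ w s := by
  simp only [dotProduct, Finset.sum_apply, Finset.mul_sum]
  exact Finset.sum_comm

theorem network_output_binomial_factorization
    (n d : ℕ)
    (A : Matrix (Fin d) (Fin d) ℂ) (G : Matrix (Fin n) (Fin n) ℂ)
    (c x₀ : Fin n → ℂ) (β γ : Fin d → ℂ)
    (cγ x₀β : Fin n × Fin d → ℂ)
    (hcγ : ∀ i j, cγ (i, j) = c i * γ j)
    (hx₀β : ∀ i j, x₀β (i, j) = x₀ i * β j)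
    (y : ℕ → ℂ)
    (hy : ∀ k, y k = cγ ⬝ᵥ
      ((((1 : Matrix (Fin n) (Fin n) ℂ) ⊗ₖ A + G ⊗ₖ (1 : Matrix (Fin d) (Fin d) ℂ)) ^ k) *ᵥ x₀β)) :
    ∀ k : ℕ, y k = ∑ s ∈ Finset.range (k + 1),
      (k.choose s : ℂ) * (c ⬝ᵥ ((G ^ s) *ᵥ x₀)) * (γ ⬝ᵥ ((A ^ (k - s)) *ᵥ β)) := by
  intro k
  have hcomm : Commute (G ⊗ₖ (1 : Matrix (Fin d) (Fin d) ℂ))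
      ((1 : Matrix (Fin n) (Fin n) ℂ) ⊗ₖ A) := by
    unfold Commute SemiconjBy
    rw [← Matrix.mul_kronecker_mul, ← Matrix.mul_kronecker_mul, one_mul, mul_one, one_mul, mul_one]
  have hpow : (((1 : Matrix (Fin n) (Fin n) ℂ) ⊗ₖ A + G ⊗ₖ (1 : Matrix (Fin d) (Fin d) ℂ)) ^ k)
      = ∑ s ∈ Finset.range (k + 1),
        (k.choose s : ℂ) • ((G ^ s) ⊗ₖ (A ^ (k - s))) := by
    rw [add_comm, hcomm.add_pow]
    refine Finset.sum_congr rfl fun s hs => ?_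
    rw [kron_pow_left, kron_pow_right, ← Matrix.mul_kronecker_mul, mul_one, one_mul,
      ← (Nat.cast_commute (k.choose s) _).eq, ← nsmul_eq_mul, ← Nat.cast_smul_eq_nsmul ℂ]
  rw [hy k, hpow, my_sum_mulVec, my_dot_sum]
  refine Finset.sum_congr rfl fun s hs => ?_
  rw [Matrix.smul_mulVec, dotProduct_smul, smul_eq_mul, mul_assoc]
  congr 1
  simp only [dotProduct, Matrix.mulVec, Fintype.sum_prod_type, Matrix.kroneckerMap_apply]
  rw [Finset.sum_mul_sum]
  refine Finset.sum_congr rfl fun i _ => Finset.sum_congr rfl fun j _ => ?_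
  rw [hcγ]
  simp only [Finset.mul_sum, Finset.sum_mul]
  rw [Finset.sum_comm]
  refine Finset.sum_congr rfl fun j' _ => Finset.sum_congr rfl fun i' _ => ?_
  rw [hx₀β]
  ring
end

section
/- Let d ≥ 1, let τ ∈ ℂ with τ ≠ 0, let η : Fin d → ℂ be pairwise distinct (injective) with η i ≠ 0 for every i, let m : Fin d → ℕ satisfy m i ≥ 1 for every i, and for each i let weights ω i s ∈ ℂ be given for s ∈ {0, …, m i − 1} with ω i (m i − 1) ≠ 0. Define y : ℕ → ℂ by y(k) = ∑_{i} ∑_{s=0}^{m i − 1} ω i s · ((k : ℂ) · τ)^s / s! · (η i)^k. Then for every n ≥ ∑_{i} m i, the n×n Hankel matrix H of y, with entries H j k = y(j + k), has rank equal to ∑_{i} m i. -/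
open Finset

open Polynomial



private lemma deriv_dvd {η : ℂ} {p : ℂ[X]} {a : ℕ} (h : (X - C η)^(a+1) ∣ p) :
    (X - C η)^a ∣ Polynomial.derivative p := by
  obtain ⟨q, rfl⟩ := h
  rw [derivative_mul, derivative_pow, derivative_X_sub_C]
  apply dvd_add
  · simp only [Nat.add_sub_cancel, mul_one]
    exact (dvd_mul_left _ _).mul_right _
  · exact ((pow_dvd_pow _ (by omega : a ≤ a + 1)).mul_right _)

private lemma vanish (η : ℂ) : ∀ (a : ℕ) (p : ℂ[X]), (X - C η)^(a+1) ∣ p →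
    ∀ (z : ℂ) (n : ℕ), p.natDegree < n →
    ∑ j ∈ Finset.range n, p.coeff j * ((j : ℂ) + z)^a * η^j = 0 := by
  intro a
  induction a with
  | zero =>
    intro p hdvd z n hn
    simp only [pow_zero, mul_one]
    have h0 : Polynomial.eval η p = 0 := by
      obtain ⟨q, rfl⟩ := hdvd
      simp
    rw [Polynomial.eval_eq_sum_range' hn η] at h0
    exact h0
  | succ a ih =>
    intro p hdvd z n hn
    set q : ℂ[X] := X * Polynomial.derivative p with hq
    have hqc : ∀ j : ℕ, q.coeff j = (j : ℂ) * p.coeff j := by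
      intro j
      cases j with
      | zero => simp [hq]
      | succ j => simp [hq, Polynomial.coeff_X_mul, Polynomial.coeff_derivative]; ring
    have hqdeg : q.natDegree < n := by
      apply lt_of_le_of_lt _ hn
      rw [Polynomial.natDegree_le_iff_coeff_eq_zero]
      intro j hj
      rw [hqc]
      rw [Polynomial.coeff_eq_zero_of_natDegree_lt hj, mul_zero]
    have hqdvd : (X - C η)^(a+1) ∣ q :=
      Dvd.dvd.mul_left (deriv_dvd (dvd_trans (pow_dvd_pow _ (by omega)) hdvd)) _
    have h1 := ih q hqdvd z n hqdeg
    have h2 := ih p (dvd_trans (pow_dvd_pow _ (by omega)) hdvd) z n hn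
    have key : ∀ j ∈ Finset.range n,
        p.coeff j * ((j : ℂ) + z)^(a+1) * η^j
          = q.coeff j * ((j : ℂ) + z)^a * η^j + z * (p.coeff j * ((j : ℂ) + z)^a * η^j) := by
      intro j _
      rw [hqc, pow_succ]
      ring
    rw [Finset.sum_congr rfl key, Finset.sum_add_distrib, ← Finset.mul_sum, h1, h2]
    simp



private lemma sol_vanish_all (N n : ℕ) (hNn : N ≤ n) (p : ℂ[X]) (hmono : p.Monic)
    (hdeg : p.natDegree = N) (f : ℕ → ℂ)
    (hsol : ∀ k, ∑ j ∈ Finset.range (N+1), p.coeff j * f (k + j) = 0)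
    (h0 : ∀ k < n, f k = 0) : ∀ k, f k = 0 := by
  intro k
  induction k using Nat.strong_induction_on with
  | _ k ih =>
    by_cases hk : k < n
    · exact h0 k hk
    · push_neg at hk
      have hkN : N ≤ k := le_trans hNn hk
      have hs := hsol (k - N)
      rw [Finset.sum_range_succ] at hs
      have hcN : p.coeff N = 1 := by
        rw [← hdeg]; exact hmono.coeff_natDegree
      have hkk : k - N + N = k := by omega
      rw [hcN, hkk, one_mul] at hs
      have hz : ∀ j ∈ Finset.range N, p.coeff j * f (k - N + j) = 0 := by
        intro j hj
        rw [Finset.mem_range] at hj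
        rw [ih (k - N + j) (by omega), mul_zero]
      rw [Finset.sum_congr rfl hz, Finset.sum_const_zero, zero_add] at hs
      exact hs

private lemma step_lemma {d : ℕ} (η : Fin d → ℂ) (P : Fin d → ℂ[X]) (e : ℂ)
    (h : ∀ k : ℕ, ∑ i, (P i).eval (k:ℂ) * η i ^ k = 0) :
    ∀ k : ℕ, ∑ i, (η i • (P i).comp (X + 1) - e • P i).eval (k:ℂ) * η i ^ k = 0 := by
  intro k
  have h1 := h (k+1)
  push_cast at h1
  have key : ∀ i ∈ Finset.univ (α := Fin d),
      (η i • (P i).comp (X + 1) - e • P i).eval (k:ℂ) * η i ^ k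
        = ((P i).eval ((k:ℂ)+1) * (η i ^ k * η i)) - e * ((P i).eval (k:ℂ) * η i ^ k) := by
    intro i _
    simp only [eval_sub, eval_smul, eval_comp, eval_add, eval_X, eval_one, smul_eq_mul]
    ring
  rw [Finset.sum_congr rfl key, Finset.sum_sub_distrib]
  have h1' : ∑ i, (P i).eval ((k:ℂ)+1) * (η i ^ k * η i) = 0 := by
    rw [← h1]
    apply Finset.sum_congr rfl
    intro i _
    rw [pow_succ]
  rw [h1', ← Finset.mul_sum, h k, mul_zero, sub_zero]

private lemma iter_lemma {d : ℕ} (η : Fin d → ℂ) (e : ℂ) (D : ℕ) :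
    ∀ (P : Fin d → ℂ[X]), (∀ k : ℕ, ∑ i, (P i).eval (k:ℂ) * η i ^ k = 0) →
    ∀ k : ℕ, ∑ i, ((fun p => η i • p.comp (X+1) - e • p)^[D] (P i)).eval (k:ℂ) * η i ^ k = 0 := by
  induction D with
  | zero => intro P h; simpa using h
  | succ D ih =>
    intro P h k
    have := ih (fun i => η i • (P i).comp (X+1) - e • P i) (step_lemma η P e h) k
    simpa [Function.iterate_succ_apply] using this

private lemma T_inj {c e : ℂ} (hce : c ≠ e) (p : ℂ[X])
    (h : c • p.comp (X + 1) - e • p = 0) : p = 0 := by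
  by_contra hp
  have hd1 : (X + 1 : ℂ[X]) = X + C 1 := by simp
  have hdeg : (X + 1 : ℂ[X]).natDegree = 1 := by rw [hd1]; exact natDegree_X_add_C 1
  have hcc : (p.comp (X + 1)).coeff p.natDegree = p.leadingCoeff := by
    have := Polynomial.coeff_comp_degree_mul_degree (p := p) (q := X + 1) (by rw [hdeg]; omega)
    rw [hdeg, mul_one] at this
    rw [this]
    have : (X + 1 : ℂ[X]).leadingCoeff = 1 := by
      rw [hd1]; exact (monic_X_add_C 1).leadingCoeff
    rw [this, one_pow, mul_one]
  have := congrArg (fun q => Polynomial.coeff q p.natDegree) h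
  simp only [Polynomial.coeff_sub, Polynomial.coeff_smul, smul_eq_mul, Polynomial.coeff_zero] at this
  rw [hcc] at this
  have hlc : p.leadingCoeff ≠ 0 := Polynomial.leadingCoeff_ne_zero.mpr hp
  have : (c - e) * p.leadingCoeff = 0 := by
    rw [sub_mul, ← this]; rfl
  rcases mul_eq_zero.mp this with h' | h'
  · exact hce (sub_eq_zero.mp h')
  · exact hlc h'

private lemma T_iter_inj {c e : ℂ} (hce : c ≠ e) (D : ℕ) : ∀ (p : ℂ[X]),
    ((fun q : ℂ[X] => c • q.comp (X+1) - e • q)^[D] p = 0) → p = 0 := by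
  induction D with
  | zero => intro p h; simpa using h
  | succ D ih =>
    intro p h
    rw [Function.iterate_succ_apply] at h
    exact T_inj hce p (ih _ h)

private lemma degsub (p : ℂ[X]) (n : ℕ) (h : p.natDegree ≤ n + 1) :
    (p.comp (X + 1) - p).natDegree ≤ n := by
  have hd1 : (X + 1 : ℂ[X]) = X + C 1 := by simp
  have hdeg : (X + 1 : ℂ[X]).natDegree = 1 := by rw [hd1]; exact natDegree_X_add_C 1
  have hcle : (p.comp (X + 1)).natDegree ≤ p.natDegree := by
    have := Polynomial.natDegree_comp_le (p := p) (q := X + 1)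
    rwa [hdeg, mul_one] at this
  rw [Polynomial.natDegree_le_iff_coeff_eq_zero]
  intro j hj
  rw [Polynomial.coeff_sub]
  by_cases hjp : p.natDegree < j
  · rw [Polynomial.coeff_eq_zero_of_natDegree_lt hjp,
      Polynomial.coeff_eq_zero_of_natDegree_lt (lt_of_le_of_lt hcle hjp), sub_zero]
  · push_neg at hjp
    have hje : j = p.natDegree := by omega
    subst hje
    have hcc : (p.comp (X + 1)).coeff p.natDegree = p.leadingCoeff := by
      have := Polynomial.coeff_comp_degree_mul_degree (p := p) (q := X + 1) (by rw [hdeg]; omega)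
      rw [hdeg, mul_one] at this
      rw [this]
      have h2 : (X + 1 : ℂ[X]).leadingCoeff = 1 := by
        rw [hd1]; exact (monic_X_add_C 1).leadingCoeff
      rw [h2, one_pow, mul_one]
    rw [hcc, Polynomial.leadingCoeff, sub_self]

private lemma T_kill (e : ℂ) : ∀ (n : ℕ) (p : ℂ[X]), p.natDegree ≤ n →
    (fun q : ℂ[X] => e • q.comp (X+1) - e • q)^[n+1] p = 0 := by
  intro n
  induction n with
  | zero =>
    intro p hp
    obtain ⟨a, rfl⟩ := Polynomial.natDegree_eq_zero.mp (Nat.le_zero.mp hp)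
    simp
  | succ n ih =>
    intro p hp
    rw [Function.iterate_succ_apply]
    apply ih
    calc (e • p.comp (X+1) - e • p).natDegree = (e • (p.comp (X+1) - p)).natDegree := by
          rw [smul_sub]
      _ ≤ (p.comp (X+1) - p).natDegree := Polynomial.natDegree_smul_le _ _
      _ ≤ n := degsub p n hp

private lemma expPolyIndep : ∀ (d : ℕ) (η : Fin d → ℂ), Function.Injective η →
    (∀ i, η i ≠ 0) → ∀ (P : Fin d → ℂ[X]),
    (∀ k : ℕ, ∑ i, (P i).eval (k:ℂ) * η i ^ k = 0) → ∀ i, P i = 0 := by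
  intro d
  induction d with
  | zero => intro _ _ _ _ _ i; exact i.elim0
  | succ d ih =>
    intro η hinj hnz P h
    set e := η (Fin.last d) with he
    set D := (P (Fin.last d)).natDegree + 1 with hD
    have hiter := iter_lemma η e D P h
    have hlast0 : (fun p : ℂ[X] => η (Fin.last d) • p.comp (X+1) - e • p)^[D]
        (P (Fin.last d)) = 0 := by
      rw [← he]
      exact T_kill e _ _ (by omega)
    have hrel : ∀ k : ℕ, ∑ i : Fin d,
        ((fun p : ℂ[X] => (η ∘ Fin.castSucc) i • p.comp (X+1) - e • p)^[D]
          (P i.castSucc)).eval (k:ℂ) * (η ∘ Fin.castSucc) i ^ k = 0 := by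
      intro k
      have hk := hiter k
      rw [Fin.sum_univ_castSucc, hlast0] at hk
      simpa using hk
    have hne : ∀ i : Fin d, η i.castSucc ≠ e := by
      intro i hcontra
      exact absurd (hinj hcontra) (Fin.ne_last_of_lt (Fin.castSucc_lt_last i))
    have hzero := ih (η ∘ Fin.castSucc) (hinj.comp (Fin.castSucc_injective d))
      (fun i => hnz _) _ hrel
    have hPcast : ∀ i : Fin d, P i.castSucc = 0 := fun i =>
      T_iter_inj (hne i) D _ (hzero i)
    have hPlast : P (Fin.last d) = 0 := by
      apply Polynomial.eq_zero_of_infinite_isRoot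
      apply Set.infinite_of_injective_forall_mem (f := (Nat.cast : ℕ → ℂ)) Nat.cast_injective
      intro k
      have hk := h k
      rw [Fin.sum_univ_castSucc] at hk
      have hz : ∀ i ∈ Finset.univ (α := Fin d),
          (P i.castSucc).eval (k:ℂ) * η i.castSucc ^ k = 0 := by
        intro i _; rw [hPcast i, Polynomial.eval_zero, zero_mul]
      rw [Finset.sum_congr rfl hz, Finset.sum_const_zero, zero_add] at hk
      exact (mul_eq_zero.mp hk).resolve_right (pow_ne_zero _ (hnz _))
    intro i
    rcases Fin.eq_castSucc_or_eq_last i with ⟨j, rfl⟩ | rfl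
    · exact hPcast j
    · exact hPlast



private lemma tri_swap {M : Type*} [AddCommMonoid M] (mm : ℕ) (g : ℕ → ℕ → M) :
    ∑ s ∈ Finset.range mm, ∑ a ∈ Finset.range (s+1), g a (s - a)
      = ∑ a ∈ Finset.range mm, ∑ b ∈ Finset.range (mm - a), g a b := by
  rw [Finset.sum_sigma', Finset.sum_sigma']
  apply Finset.sum_nbij' (fun q => ⟨q.2, q.1 - q.2⟩) (fun q => ⟨q.1 + q.2, q.1⟩)
  · rintro ⟨s, a⟩ hmem
    simp only [Finset.mem_sigma, Finset.mem_range] at hmem ⊢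
    omega
  · rintro ⟨a, b⟩ hmem
    simp only [Finset.mem_sigma, Finset.mem_range] at hmem ⊢
    omega
  · rintro ⟨s, a⟩ hmem
    simp only [Finset.mem_sigma, Finset.mem_range] at hmem
    have hs : a + (s - a) = s := by omega
    rw [hs]
  · rintro ⟨a, b⟩ hmem
    simp only [Finset.mem_sigma, Finset.mem_range] at hmem
    rw [Nat.add_sub_cancel_left]
  · rintro ⟨s, a⟩ hmem
    rfl

private lemma entry_identity (mm : ℕ) (ω : ℕ → ℂ) (τ c : ℂ) (x z : ℕ) :
    ∑ s ∈ Finset.range mm, ω s * (((x + z : ℕ) : ℂ) * τ)^s / (s.factorial : ℂ) * c^(x+z)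
      = ∑ a ∈ Finset.range mm, ∑ b ∈ Finset.range mm,
          ((x:ℂ)^a * c^x) *
          (if a + b + 1 ≤ mm then
            ω (a+b) * τ^(a+b) * (((a+b).choose a : ℕ):ℂ) / (((a+b).factorial : ℕ):ℂ)
           else 0) * ((z:ℂ)^b * c^z) := by
  set g : ℕ → ℕ → ℂ := fun a b =>
    ω (a+b) * τ^(a+b) * (((a+b).choose a : ℕ):ℂ) / (((a+b).factorial : ℕ):ℂ)
      * (x:ℂ)^a * (z:ℂ)^b * c^x * c^z with hg
  have lhs_eq : ∑ s ∈ Finset.range mm, ω s * (((x + z : ℕ) : ℂ) * τ)^s / (s.factorial : ℂ) * c^(x+z)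
      = ∑ s ∈ Finset.range mm, ∑ a ∈ Finset.range (s+1), g a (s - a) := by
    apply Finset.sum_congr rfl
    intro s _
    have hxz : ((x + z : ℕ) : ℂ) = (x:ℂ) + (z:ℂ) := by push_cast; ring
    rw [hxz, mul_pow, add_pow, pow_add]
    rw [Finset.sum_mul, Finset.mul_sum, Finset.sum_div, Finset.sum_mul]
    apply Finset.sum_congr rfl
    intro a ha
    rw [Finset.mem_range] at ha
    have hs : a + (s - a) = s := by omega
    rw [hg]
    simp only
    rw [hs]
    ring
  rw [lhs_eq, tri_swap]
  apply Finset.sum_congr rfl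
  intro a ha
  rw [Finset.mem_range] at ha
  rw [← Finset.sum_subset (Finset.range_subset_range.mpr (by omega : mm - a ≤ mm))
    (by
      intro b _ hb
      rw [Finset.mem_range, not_lt] at hb
      rw [if_neg (by omega : ¬ (a + b + 1 ≤ mm))]
      ring)]
  apply Finset.sum_congr rfl
  intro b hb
  rw [Finset.mem_range] at hb
  rw [if_pos (by omega : a + b + 1 ≤ mm), hg]
  simp only
  ring


private lemma block_det_ne_zero (mm : ℕ) (hmm : 1 ≤ mm) (ω : ℕ → ℂ) (τ : ℂ) (hτ : τ ≠ 0)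
    (hω : ω (mm - 1) ≠ 0) :
    (Matrix.of fun a b : Fin mm =>
      if (a:ℕ) + (b:ℕ) + 1 ≤ mm then
        ω ((a:ℕ)+(b:ℕ)) * τ^((a:ℕ)+(b:ℕ)) * ((((a:ℕ)+(b:ℕ)).choose (a:ℕ) : ℕ):ℂ)
          / ((((a:ℕ)+(b:ℕ)).factorial : ℕ):ℂ)
      else 0).det ≠ 0 := by
  set B : Matrix (Fin mm) (Fin mm) ℂ := Matrix.of fun a b : Fin mm =>
      if (a:ℕ) + (b:ℕ) + 1 ≤ mm then
        ω ((a:ℕ)+(b:ℕ)) * τ^((a:ℕ)+(b:ℕ)) * ((((a:ℕ)+(b:ℕ)).choose (a:ℕ) : ℕ):ℂ)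
          / ((((a:ℕ)+(b:ℕ)).factorial : ℕ):ℂ)
      else 0 with hB
  set U : Matrix (Fin mm) (Fin mm) ℂ := B.submatrix id Fin.rev with hU
  have hrev : ∀ a : Fin mm, (Fin.rev a : ℕ) = mm - 1 - (a : ℕ) := by
    intro a
    rw [Fin.val_rev]
    omega
  have hUB : B = U.submatrix id ⇑(Fin.revPerm : Equiv.Perm (Fin mm)) := by
    ext a b
    simp [hU, Matrix.submatrix_apply, Fin.rev_rev]
  have hUtri : U.BlockTriangular id := by
    intro a b hab
    simp only [id] at hab
    simp only [hU, Matrix.submatrix_apply, id, hB, Matrix.of_apply]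
    rw [if_neg]
    have := hrev b
    have hb := b.isLt
    have ha := a.isLt
    omega
  have hUdiag : ∀ a : Fin mm, U a a ≠ 0 := by
    intro a
    simp only [hU, Matrix.submatrix_apply, id, hB, Matrix.of_apply]
    have hv := hrev a
    have ha := a.isLt
    rw [if_pos (by omega)]
    have hsum : (a:ℕ) + (Fin.rev a : ℕ) = mm - 1 := by omega
    rw [hsum]
    apply div_ne_zero
    · exact mul_ne_zero (mul_ne_zero hω (pow_ne_zero _ hτ))
        (Nat.cast_ne_zero.mpr (Nat.choose_pos (by omega)).ne')
    · exact Nat.cast_ne_zero.mpr (Nat.factorial_ne_zero _)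
  have hdetU : U.det ≠ 0 := by
    rw [Matrix.det_of_upperTriangular hUtri]
    exact Finset.prod_ne_zero_iff.mpr fun a _ => hUdiag a
  rw [hUB, Matrix.det_permute']
  rcases Int.units_eq_one_or (Equiv.Perm.sign (Fin.revPerm : Equiv.Perm (Fin mm))) with h | h <;>
    simp [h, hdetU]

theorem continuous_time_hankel_rank
    (d : ℕ) (hd : 1 ≤ d) (τ : ℂ) (hτ : τ ≠ 0)
    (η : Fin d → ℂ) (hη : Function.Injective η) (hη0 : ∀ i, η i ≠ 0)
    (m : Fin d → ℕ) (hm : ∀ i, 1 ≤ m i)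
    (ω : Fin d → ℕ → ℂ) (hω : ∀ i, ω i (m i - 1) ≠ 0)
    (y : ℕ → ℂ)
    (hy : ∀ k, y k = ∑ i, ∑ s ∈ Finset.range (m i),
      ω i s * ((k : ℂ) * τ) ^ s / (s.factorial : ℂ) * η i ^ k) :
    ∀ n : ℕ, (∑ i, m i) ≤ n →
      ∀ H : Matrix (Fin n) (Fin n) ℂ,
        (∀ j k : Fin n, H j k = y ((j : ℕ) + (k : ℕ))) →
        H.rank = ∑ i, m i := by
  intro n hn H hH
  classical
  set N : ℕ := ∑ i, m i with hN
  -- the characteristic polynomial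
  set p : ℂ[X] := ∏ i, (X - C (η i))^(m i) with hp
  have hpm : p.Monic := monic_prod_of_monic _ _ (fun i _ => (monic_X_sub_C _).pow _)
  have hpdeg : p.natDegree = N := by
    rw [hp, Polynomial.natDegree_prod _ _ (fun i _ => ((monic_X_sub_C (η i)).pow _).ne_zero)]
    simp [Polynomial.natDegree_pow, Polynomial.natDegree_X_sub_C, hN]
  have hdvd : ∀ (i : Fin d) (a : ℕ), a < m i → (X - C (η i))^(a+1) ∣ p := by
    intro i a ha
    exact dvd_trans (pow_dvd_pow _ (by omega)) (Finset.dvd_prod_of_mem _ (Finset.mem_univ i))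
  -- matrices
  set V : Matrix ((i : Fin d) × Fin (m i)) (Fin n) ℂ :=
    Matrix.of fun q k => ((k : ℕ) : ℂ)^((q.2 : ℕ)) * η q.1 ^ (k : ℕ) with hV
  set B : ∀ i : Fin d, Matrix (Fin (m i)) (Fin (m i)) ℂ := fun i =>
    Matrix.of fun a b =>
      if (a:ℕ) + (b:ℕ) + 1 ≤ m i then
        ω i ((a:ℕ)+(b:ℕ)) * τ^((a:ℕ)+(b:ℕ)) * ((((a:ℕ)+(b:ℕ)).choose (a:ℕ) : ℕ):ℂ)
          / ((((a:ℕ)+(b:ℕ)).factorial : ℕ):ℂ)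
      else 0 with hBdef
  set M : Matrix ((i : Fin d) × Fin (m i)) ((i : Fin d) × Fin (m i)) ℂ :=
    Matrix.blockDiagonal' B with hM
  -- Step A : factorization
  have hfact : H = V.transpose * (M * V) := by
    ext j k
    rw [hH j k, hy]
    rw [Matrix.mul_apply]
    have hsum1 : ∀ q : (i : Fin d) × Fin (m i),
        V.transpose j q * (M * V) q k
          = V q j * ∑ b : Fin (m (q.1)), B q.1 q.2 b * V ⟨q.1, b⟩ k := by
      rintro ⟨i, a⟩
      rw [Matrix.transpose_apply, Matrix.mul_apply]
      congr 1
      rw [← Finset.univ_sigma_univ, Finset.sum_sigma]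
      rw [Finset.sum_eq_single_of_mem i (Finset.mem_univ i)]
      · apply Finset.sum_congr rfl
        intro b _
        rw [hM, Matrix.blockDiagonal'_apply_eq]
      · intro i' _ hne
        apply Finset.sum_eq_zero
        intro b _
        rw [hM, Matrix.blockDiagonal'_apply, dif_neg (by simpa using hne.symm), zero_mul]
    rw [Finset.sum_congr rfl (fun q _ => hsum1 q)]
    rw [← Finset.univ_sigma_univ, Finset.sum_sigma]
    apply Finset.sum_congr rfl
    intro i _
    have := entry_identity (m i) (ω i) τ (η i) (j : ℕ) (k : ℕ)
    rw [this]
    rw [← Fin.sum_univ_eq_sum_range (fun a => ∑ b ∈ Finset.range (m i),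
      (((j:ℕ):ℂ)^a * η i^(j:ℕ)) *
      (if a + b + 1 ≤ m i then
        ω i (a+b) * τ^(a+b) * (((a+b).choose a : ℕ):ℂ) / (((a+b).factorial : ℕ):ℂ)
       else 0) * (((k:ℕ):ℂ)^b * η i^(k:ℕ))) (m i)]
    apply Finset.sum_congr rfl
    intro a _
    rw [← Fin.sum_univ_eq_sum_range (fun b =>
      (((j:ℕ):ℂ)^(a:ℕ) * η i^(j:ℕ)) *
      (if (a:ℕ) + b + 1 ≤ m i then
        ω i ((a:ℕ)+b) * τ^((a:ℕ)+b) * ((((a:ℕ)+b).choose (a:ℕ) : ℕ):ℂ)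
          / ((((a:ℕ)+b).factorial : ℕ):ℂ)
       else 0) * (((k:ℕ):ℂ)^b * η i^(k:ℕ))) (m i)]
    rw [Finset.mul_sum]
    apply Finset.sum_congr rfl
    intro b _
    rw [hV, hBdef]
    simp only [Matrix.of_apply]
    ring
  -- Step B : rows of V are linearly independent
  have hVinj : Function.Injective (V.transpose.mulVecLin) := by
    rw [← LinearMap.ker_eq_bot]
    rw [LinearMap.ker_eq_bot']
    intro c hc
    rw [Matrix.mulVecLin_apply] at hc
    set f : ℕ → ℂ := fun t => ∑ q : (i : Fin d) × Fin (m i),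
      c q * ((t : ℂ)^((q.2 : ℕ)) * η q.1 ^ t) with hf
    have hfn : ∀ t < n, f t = 0 := by
      intro t ht
      have := congrFun hc ⟨t, ht⟩
      rw [Matrix.mulVec, Pi.zero_apply] at this
      rw [hf]
      rw [← this]
      simp only [dotProduct, Matrix.transpose_apply, hV, Matrix.of_apply]
      apply Finset.sum_congr rfl
      intro q _
      ring
    have hsol : ∀ k, ∑ j ∈ Finset.range (N+1), p.coeff j * f (k + j) = 0 := by
      intro k
      have : ∀ j ∈ Finset.range (N+1), p.coeff j * f (k + j)
          = ∑ q : (i : Fin d) × Fin (m i),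
            (c q * η q.1 ^ k) * (p.coeff j * ((j : ℂ) + (k : ℂ))^((q.2 : ℕ)) * η q.1 ^ j) := by
        intro j _
        rw [hf, Finset.mul_sum]
        apply Finset.sum_congr rfl
        intro q _
        have h1 : ((k + j : ℕ) : ℂ) = (j : ℂ) + (k : ℂ) := by push_cast; ring
        rw [h1, pow_add]
        ring
      rw [Finset.sum_congr rfl this, Finset.sum_comm]
      apply Finset.sum_eq_zero
      intro q _
      rw [← Finset.mul_sum]
      rw [vanish (η q.1) (q.2 : ℕ) p (hdvd q.1 (q.2 : ℕ) q.2.isLt) (k : ℂ) (N+1)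
        (by omega : p.natDegree < N+1), mul_zero]
    have hf0 : ∀ t, f t = 0 := sol_vanish_all N n hn p hpm hpdeg f hsol hfn
    set P : Fin d → ℂ[X] := fun i => ∑ a : Fin (m i), Polynomial.C (c ⟨i, a⟩) * X^(a:ℕ)
      with hP
    have hPrel : ∀ k : ℕ, ∑ i, (P i).eval (k:ℂ) * η i ^ k = 0 := by
      intro k
      have hfk : f k = ∑ i, (P i).eval (k:ℂ) * η i ^ k := by
        simp only [hf, hP, Polynomial.eval_finset_sum, Polynomial.eval_mul, Polynomial.eval_C,
          Polynomial.eval_pow, Polynomial.eval_X]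
        rw [← Finset.univ_sigma_univ, Finset.sum_sigma]
        apply Finset.sum_congr rfl
        intro i _
        rw [Finset.sum_mul]
        apply Finset.sum_congr rfl
        intro a _
        ring
      rw [← hfk]
      exact hf0 k
    have hP0 := expPolyIndep d η hη hη0 P hPrel
    funext q
    obtain ⟨i, a⟩ := q
    have := congrArg (fun r => Polynomial.coeff r (a : ℕ)) (hP0 i)
    simp only [hP, Polynomial.finset_sum_coeff, Polynomial.coeff_C_mul,
      Polynomial.coeff_X_pow, Polynomial.coeff_zero] at this
    rw [Finset.sum_eq_single_of_mem a (Finset.mem_univ a)] at this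
    · rw [if_pos rfl, mul_one] at this
      exact this
    · intro b _ hb
      rw [if_neg (fun hcon => hb (Fin.val_injective hcon.symm)), mul_zero]
  -- rank computations
  have hcard : Fintype.card ((i : Fin d) × Fin (m i)) = N := by
    simp [Fintype.card_sigma, hN]
  have hVtrank : Module.finrank ℂ (LinearMap.range V.transpose.mulVecLin) = N := by
    rw [LinearMap.finrank_range_of_inj hVinj, Module.finrank_fintype_fun_eq_card, hcard]
  have hVsurj : Function.Surjective V.mulVecLin := by
    rw [← LinearMap.range_eq_top]
    apply Submodule.eq_top_of_finrank_eq
    have h1 : Module.finrank ℂ (LinearMap.range V.mulVecLin) = V.rank := rfl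
    have h2 : V.rank = V.transpose.rank := (Matrix.rank_transpose V).symm
    have h3 : V.transpose.rank = N := hVtrank
    rw [h1, h2, h3, Module.finrank_fintype_fun_eq_card, hcard]
  have hMsurj : Function.Surjective M.mulVecLin := by
    intro w
    refine ⟨(Matrix.blockDiagonal' (fun i => (B i)⁻¹)).mulVec w, ?_⟩
    rw [Matrix.mulVecLin_apply, Matrix.mulVec_mulVec]
    have hunit : M * Matrix.blockDiagonal' (fun i => (B i)⁻¹) = 1 := by
      rw [hM, ← Matrix.blockDiagonal'_mul]
      rw [show (fun i => B i * (B i)⁻¹) = fun _ => 1 from funext fun i =>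
        Matrix.mul_nonsing_inv (B i) (isUnit_iff_ne_zero.mpr
          (block_det_ne_zero (m i) (hm i) (ω i) τ hτ (hω i)))]
      exact Matrix.blockDiagonal'_one
    rw [hunit, Matrix.one_mulVec]
  have hMVsurj : Function.Surjective (M * V).mulVecLin := by
    rw [Matrix.mulVecLin_mul]
    simpa [LinearMap.coe_comp] using hMsurj.comp hVsurj
  rw [hfact, Matrix.rank, Matrix.mulVecLin_mul,
    LinearMap.range_comp_of_range_eq_top _ (LinearMap.range_eq_top.mpr hMVsurj)]
  exact hVtrank
end

section
/- Let d ≥ 1, let τ ∈ ℂ with τ ≠ 0, let η : Fin d → ℂ be pairwise distinct (injective) with η i ≠ 0 for every i, let m : Fin d → ℕ satisfy m i ≥ 1 for every i, and for each i let weights ω i s ∈ ℂ be given for s ∈ {0, …, m i − 1} with ω i (m i − 1) ≠ 0. Define y : ℕ → ℂ by y(k) = ∑_{i} ∑_{s=0}^{m i − 1} ω i s · ((k : ℂ) · τ)^s / s! · (η i)^k, and let r = ∑_{i} m i. Suppose α : Fin r → ℂ satisfies ∑_{j=0}^{r−1} α j · y(k + j) = − y(k + r) for every k ∈ {0, …,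 r−1}. Then X^r + ∑_{j=0}^{r−1} (α j) · X^j = ∏_{i} (X − C(η i))^{m i} in ℂ[X]; in particular, every η i is a root of this polynomial of multiplicity exactly m i. -/
open Finset Polynomial

noncomputable def ann (g : ℂ[X]) (u : ℕ → ℂ) (k : ℕ) : ℂ :=
  g.sum fun j a => a * u (k + j)

noncomputable def T (η : ℂ) (g P : ℂ[X]) : ℂ[X] :=
  g.sum fun j a => C (a * η ^ j) * (taylor (j : ℂ) P)

lemma ann_eq_range (g : ℂ[X]) (u : ℕ → ℂ) (k N : ℕ) (h : g.natDegree < N) :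
    ann g u k = ∑ j ∈ Finset.range N, g.coeff j * u (k + j) :=
  Polynomial.sum_over_range' g (fun n => by simp) N h

lemma ann_add (g h : ℂ[X]) (u : ℕ → ℂ) (k : ℕ) :
    ann (g + h) u k = ann g u k + ann h u k :=
  Polynomial.sum_add_index g h _ (fun i => by simp) (fun a b c => add_mul _ _ _)

lemma ann_C (a : ℂ) (u : ℕ → ℂ) (k : ℕ) : ann (C a) u k = a * u k := by
  rw [ann, Polynomial.sum_C_index] <;> simp

lemma ann_X_mul (g : ℂ[X]) (u : ℕ → ℂ) (k : ℕ) :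
    ann (X * g) u k = ann g u (k + 1) := by
  rcases eq_or_ne g 0 with rfl | hg
  · simp [ann]
  rw [ann_eq_range (X * g) u k (g.natDegree + 2) (by
      calc (X * g).natDegree ≤ 1 + g.natDegree := natDegree_mul_le.trans (by simp)
      _ < g.natDegree + 2 := by omega),
    ann_eq_range g u (k+1) (g.natDegree + 1) (by omega),
    Finset.sum_range_succ' _ (g.natDegree + 1)]
  simp [Polynomial.coeff_X_mul, mul_comm, add_assoc, add_comm 1]

lemma ann_C_mul (a : ℂ) (g : ℂ[X]) (u : ℕ → ℂ) (k : ℕ) :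
    ann (C a * g) u k = a * ann g u k := by
  rcases eq_or_ne a 0 with rfl | ha
  · simp [ann]
  rw [ann_eq_range (C a * g) u k (g.natDegree + 1) (by
      simpa using natDegree_C_mul_le a g |>.trans_lt (lt_add_one _)),
    ann_eq_range g u k (g.natDegree + 1) (by omega), Finset.mul_sum]
  simp [mul_assoc]

lemma ann_mul (g h : ℂ[X]) (u : ℕ → ℂ) (k : ℕ) :
    ann (g * h) u k = ann g (fun k' => ann h u k') k := by
  induction g using Polynomial.induction_on generalizing k with
  | C a => rw [ann_C_mul, ann_C]
  | add p q hp hq => rw [add_mul, ann_add, ann_add, hp, hq]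
  | monomial n a ih =>
      have h1 : C a * X ^ (n + 1) * h = X * (C a * X ^ n * h) := by ring
      have h2 : (C a * X ^ (n + 1)) = X * (C a * X ^ n) := by ring
      rw [h1, h2, ann_X_mul, ann_X_mul, ih]

lemma ann_zero_seq (g : ℂ[X]) (k : ℕ) : ann g (fun _ => 0) k = 0 := by
  simp [ann, Polynomial.sum]

lemma ann_fun_sum {ι : Type*} (s : Finset ι) (g : ℂ[X]) (u : ι → ℕ → ℂ) (k : ℕ) :
    ann g (fun k' => ∑ i ∈ s, u i k') k = ∑ i ∈ s, ann g (u i) k := by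
  rw [ann_eq_range g _ k (g.natDegree + 1) (by omega)]
  simp_rw [Finset.mul_sum]
  rw [Finset.sum_comm]
  exact Finset.sum_congr rfl fun i _ => (ann_eq_range g (u i) k (g.natDegree+1) (by omega)).symm

lemma ann_poly_exp (g P : ℂ[X]) (η : ℂ) (k : ℕ) :
    ann g (fun k' => P.eval (k' : ℂ) * η ^ k') k = (T η g P).eval (k : ℂ) * η ^ k := by
  rw [ann, T, Polynomial.sum_def, Polynomial.sum_def, Polynomial.eval_finset_sum,
    Finset.sum_mul]
  refine Finset.sum_congr rfl fun j _ => ?_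
  rw [eval_mul, eval_C, taylor_eval]
  push_cast
  rw [pow_add]
  ring
lemma poly_funext {P Q : ℂ[X]} (h : ∀ k : ℕ, P.eval (k : ℂ) = Q.eval (k : ℂ)) : P = Q := by
  have := Polynomial.eq_zero_of_infinite_isRoot (P - Q)
    (Set.infinite_of_injective_forall_mem (f := (Nat.cast : ℕ → ℂ))
      Nat.cast_injective (fun k => by simp [Polynomial.IsRoot, h k]))
  exact sub_eq_zero.mp this

lemma T_zero (η : ℂ) (g : ℂ[X]) : T η g 0 = 0 := by
  simp [T, Polynomial.sum]

lemma T_one (η : ℂ) (P : ℂ[X]) : T η 1 P = P := by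
  rw [T, ← Polynomial.C_1, Polynomial.sum_C_index (by simp)]
  simp

-- coefficient at n (≥ natDegree P) and degree bound
lemma taylor_coeff_top (P : ℂ[X]) (r : ℂ) {n : ℕ} (h : P.natDegree ≤ n) :
    (taylor r P).coeff n = P.coeff n := by
  rw [taylor_coeff]
  have hh : hasseDeriv n P = C (P.coeff n) := by
    ext i
    rw [hasseDeriv_coeff]
    rcases Nat.eq_zero_or_pos i with rfl | hi
    · simp
    · rw [Polynomial.coeff_C, if_neg (by omega),
        Polynomial.coeff_eq_zero_of_natDegree_lt (by omega), mul_zero]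
  rw [hh, eval_C]

lemma T_natDegree_le (η : ℂ) (g P : ℂ[X]) {n : ℕ} (h : P.natDegree ≤ n) :
    (T η g P).natDegree ≤ n := by
  rw [T, Polynomial.sum_def]
  refine Polynomial.natDegree_sum_le_of_forall_le _ _ fun j _ => ?_
  exact (natDegree_C_mul_le _ _).trans (by rw [natDegree_taylor]; exact h)

lemma T_coeff_top (η : ℂ) (g P : ℂ[X]) {n : ℕ} (h : P.natDegree ≤ n) :
    (T η g P).coeff n = g.eval η * P.coeff n := by
  rw [T, Polynomial.sum_def, Polynomial.finset_sum_coeff, Polynomial.eval_eq_sum,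
    Polynomial.sum_def, Finset.sum_mul]
  refine Finset.sum_congr rfl fun j _ => ?_
  rw [Polynomial.coeff_C_mul, taylor_coeff_top P _ h]

lemma T_mul (η : ℂ) (hη : η ≠ 0) (g h P : ℂ[X]) :
    T η (g * h) P = T η g (T η h P) := by
  apply poly_funext
  intro k
  have hpow : (η : ℂ) ^ k ≠ 0 := pow_ne_zero _ hη
  have h1 := ann_poly_exp (g * h) P η k
  have h2 := ann_mul g h (fun k' => P.eval (k' : ℂ) * η ^ k') k
  have h3 : (fun k' => ann h (fun k'' => P.eval (k'' : ℂ) * η ^ k'') k')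
      = fun k' : ℕ => (T η h P).eval (k' : ℂ) * η ^ k' := funext fun k' => ann_poly_exp h P η k'
  rw [h3] at h2
  rw [ann_poly_exp g (T η h P) η k] at h2
  have := h1.symm.trans h2
  exact mul_right_cancel₀ hpow this

lemma T_X_sub_C (η μ : ℂ) (P : ℂ[X]) :
    T η (X - C μ) P = C η * taylor 1 P - C μ * P := by
  rw [sub_eq_add_neg, T, Polynomial.sum_add_index _ _ _ (by simp) (fun a b c => by
    rw [add_mul, Polynomial.C_add, add_mul]),
    Polynomial.sum_X_index (by simp), ← Polynomial.C_neg,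
    Polynomial.sum_C_index (by simp)]
  push_cast
  simp only [pow_one, pow_zero, mul_one, one_mul, taylor_zero]
  rw [Polynomial.C_neg]
  ring

lemma taylor_ne_zero' {P : ℂ[X]} (hP : P ≠ 0) (r : ℂ) : taylor r P ≠ 0 := by
  intro h
  have : taylor (-r) (taylor r P) = 0 := by rw [h]; simp
  rw [taylor_taylor] at this
  simp at this
  exact hP this

lemma taylor_leadingCoeff (P : ℂ[X]) (r : ℂ) : (taylor r P).leadingCoeff = P.leadingCoeff := by
  rw [leadingCoeff, natDegree_taylor, taylor_coeff_top P r le_rfl, leadingCoeff]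

lemma diff_natDegree_le {P : ℂ[X]} (h1 : 1 ≤ P.natDegree) :
    (taylor 1 P - P).natDegree ≤ P.natDegree - 1 := by
  have hP : P ≠ 0 := fun h => by simp [h] at h1
  have hd : (taylor 1 P - P).degree < P.degree := by
    refine (Polynomial.degree_sub_lt ?_ (taylor_ne_zero' hP 1) (taylor_leadingCoeff P 1)).trans_le ?_
    · rw [degree_eq_natDegree (taylor_ne_zero' hP 1), degree_eq_natDegree hP, natDegree_taylor]
    · rw [degree_eq_natDegree (taylor_ne_zero' hP 1), degree_eq_natDegree hP, natDegree_taylor]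
  rcases eq_or_ne (taylor 1 P - P) 0 with h0 | h0
  · simp [h0]
  · have := Polynomial.natDegree_lt_natDegree h0 hd
    omega

lemma taylor_coeff_sub_one {P : ℂ[X]} {n : ℕ} (hn : 1 ≤ n) (h : P.natDegree ≤ n) :
    (taylor 1 P).coeff (n - 1) = P.coeff (n - 1) + n * P.coeff n := by
  rw [taylor_coeff]
  have hdeg : ((hasseDeriv (n-1)) P).natDegree < 2 := by
    have := Polynomial.natDegree_hasseDeriv_le P (n - 1)
    omega
  rw [Polynomial.eval_eq_sum_range' hdeg]
  rw [Finset.sum_range_succ, Finset.sum_range_one]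
  rw [hasseDeriv_coeff, hasseDeriv_coeff]
  have h1 : 0 + (n - 1) = n - 1 := by omega
  have h2 : 1 + (n - 1) = n := by omega
  rw [h1, h2]
  have h3 : n.choose (n - 1) = n := by
    have := Nat.choose_symm (show n - 1 ≤ n by omega) (n := n)
    have h4 : n - (n - 1) = 1 := by omega
    rw [h4] at this
    rw [← this, Nat.choose_one_right]
  simp [h3, Nat.choose_self]

lemma T_drop_zero (η : ℂ) {P : ℂ[X]} (h : P.natDegree = 0) : T η (X - C η) P = 0 := by
  obtain ⟨c, rfl⟩ := Polynomial.natDegree_eq_zero.mp h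
  rw [T_X_sub_C, taylor_C]
  ring

lemma T_drop_le (η : ℂ) {P : ℂ[X]} (h1 : 1 ≤ P.natDegree) :
    (T η (X - C η) P).natDegree ≤ P.natDegree - 1 := by
  rw [T_X_sub_C, ← mul_sub]
  exact (natDegree_C_mul_le _ _).trans (diff_natDegree_le h1)

lemma T_drop_exact (η : ℂ) (hη : η ≠ 0) {P : ℂ[X]} (h1 : 1 ≤ P.natDegree) :
    T η (X - C η) P ≠ 0 ∧ (T η (X - C η) P).natDegree = P.natDegree - 1 := by
  have hP : P ≠ 0 := fun h => by simp [h] at h1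
  have hco : (T η (X - C η) P).coeff (P.natDegree - 1) = η * (P.natDegree * P.coeff P.natDegree) := by
    rw [T_X_sub_C, ← mul_sub, Polynomial.coeff_C_mul, Polynomial.coeff_sub,
      taylor_coeff_sub_one h1 le_rfl]
    ring
  have hne : (T η (X - C η) P).coeff (P.natDegree - 1) ≠ 0 := by
    rw [hco]
    refine mul_ne_zero hη (mul_ne_zero ?_ (Polynomial.coeff_ne_zero_of_eq_degree ?_))
    · exact Nat.cast_ne_zero.mpr (by omega)
    · exact degree_eq_natDegree hP
  constructor
  · intro h0; rw [h0] at hne; simp at hne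
  · exact le_antisymm (T_drop_le η h1) (Polynomial.le_natDegree_of_ne_zero hne)

lemma T_annihilate (η : ℂ) (hη : η ≠ 0) {P : ℂ[X]} {m : ℕ} (h : P.natDegree < m) :
    T η ((X - C η) ^ m) P = 0 := by
  induction m generalizing P with
  | zero => omega
  | succ m ih =>
      rw [pow_succ, T_mul η hη]
      rcases eq_or_ne (T η (X - C η) P) 0 with h0 | h0
      · rw [h0, T_zero]
      rcases Nat.eq_zero_or_pos P.natDegree with hd | hd
      · exact absurd (T_drop_zero η hd) h0
      · exact ih ((T_drop_le η hd).trans_lt (by omega))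

lemma T_iter_exact (η : ℂ) (hη : η ≠ 0) {Q : ℂ[X]} (hQ : Q ≠ 0) {t : ℕ}
    (ht : t ≤ Q.natDegree) :
    T η ((X - C η) ^ t) Q ≠ 0 ∧ (T η ((X - C η) ^ t) Q).natDegree = Q.natDegree - t := by
  induction t generalizing Q with
  | zero => rw [pow_zero, T_one]; exact ⟨hQ, by omega⟩
  | succ t ih =>
      rw [pow_succ', T_mul η hη]
      obtain ⟨h3, h4⟩ := ih hQ (by omega)
      have hd : 1 ≤ (T η ((X - C η) ^ t) Q).natDegree := by omega
      obtain ⟨h1, h2⟩ := T_drop_exact η hη hd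
      exact ⟨h1, by omega⟩

lemma eval_nat_zero {P : ℂ[X]} (h : ∀ k : ℕ, P.eval (k : ℂ) = 0) : P = 0 :=
  poly_funext (fun k => by simp [h k])

lemma T_inj_of_eval_ne (η : ℂ) {g P : ℂ[X]} (hg : g.eval η ≠ 0) (h : T η g P = 0) :
    P = 0 := by
  by_contra hP
  have := T_coeff_top η g P (le_refl P.natDegree)
  rw [h] at this
  simp only [Polynomial.coeff_zero] at this
  exact hP (Polynomial.leadingCoeff_eq_zero.mp
    ((mul_eq_zero.mp this.symm).resolve_left hg))

lemma indep {ι : Type*} [DecidableEq ι] (s : Finset ι) (ηf : ι → ℂ) (hinj : Set.InjOn ηf s)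
    (h0 : ∀ i ∈ s, ηf i ≠ 0) :
    ∀ P : ι → ℂ[X], (∀ k : ℕ, ∑ i ∈ s, (P i).eval (k : ℂ) * ηf i ^ k = 0) →
      ∀ i ∈ s, P i = 0 := by
  induction s using Finset.induction_on with
  | empty => intro P h i hi; simp at hi
  | @insert a t ha ih =>
      intro P h
      have hinj' : Set.InjOn ηf t := hinj.mono (by simp [Finset.subset_insert])
      have h0' : ∀ i ∈ t, ηf i ≠ 0 := fun i hi => h0 i (Finset.mem_insert_of_mem hi)
      set N := (P a).natDegree + 1 with hN
      set G : ℂ[X] := (X - C (ηf a)) ^ N with hG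
      -- apply ann G to the vanishing sum
      have key : ∀ k : ℕ, ∑ i ∈ insert a t, (T (ηf i) G (P i)).eval (k : ℂ) * ηf i ^ k = 0 := by
        intro k
        have : ann G (fun k' => ∑ i ∈ insert a t, (P i).eval (k' : ℂ) * ηf i ^ k') k = 0 := by
          have hz : (fun k' : ℕ => ∑ i ∈ insert a t, (P i).eval (k' : ℂ) * ηf i ^ k')
              = fun _ => (0 : ℂ) := funext fun k' => h k'
          rw [hz, ann_zero_seq]
        rw [ann_fun_sum] at this
        rw [← this]
        exact Finset.sum_congr rfl fun i _ => (ann_poly_exp G (P i) (ηf i) k).symm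
      -- the a-term vanishes
      have hTa : T (ηf a) G (P a) = 0 := T_annihilate (ηf a) (h0 a (Finset.mem_insert_self a t)) (by omega)
      have key' : ∀ k : ℕ, ∑ i ∈ t, (T (ηf i) G (P i)).eval (k : ℂ) * ηf i ^ k = 0 := by
        intro k
        have := key k
        rw [Finset.sum_insert ha, hTa] at this
        simpa using this
      have hPt : ∀ i ∈ t, P i = 0 := by
        intro i hi
        have hT0 := ih hinj' h0' (fun i => T (ηf i) G (P i)) key' i hi
        refine T_inj_of_eval_ne (ηf i) ?_ hT0
        rw [Polynomial.eval_pow]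
        refine pow_ne_zero _ ?_
        rw [Polynomial.eval_sub, Polynomial.eval_X, Polynomial.eval_C, sub_ne_zero]
        intro heq
        exact ha (by
          have : i = a := hinj (Finset.mem_insert_of_mem hi) (Finset.mem_insert_self a t) heq
          rwa [← this])
      have hPa : P a = 0 := by
        refine eval_nat_zero fun k => ?_
        have := h k
        rw [Finset.sum_insert ha, Finset.sum_eq_zero (fun i hi => by rw [hPt i hi]; simp),
          add_zero] at this
        have hpow : (ηf a) ^ k ≠ 0 := pow_ne_zero _ (h0 a (Finset.mem_insert_self a t))
        exact (mul_eq_zero.mp this).resolve_right hpow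
      intro i hi
      rcases Finset.mem_insert.mp hi with rfl | hi'
      · exact hPa
      · exact hPt i hi'

lemma claimB (η : ℂ) (hη : η ≠ 0) {f P : ℂ[X]} {n : ℕ} (hf : f ≠ 0)
    (hT : T η f P = 0) (hPd : P.natDegree ≤ n) (hP : P.coeff n ≠ 0) :
    n + 1 ≤ rootMultiplicity η f := by
  by_contra hcon
  push_neg at hcon
  obtain ⟨u, hfu, hnd⟩ := Polynomial.exists_eq_pow_rootMultiplicity_mul_and_not_dvd f hf η
  have hu : u.eval η ≠ 0 := fun h => hnd (Polynomial.dvd_iff_isRoot.mpr h)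
  have hQc : (T η u P).coeff n = u.eval η * P.coeff n := T_coeff_top η u P hPd
  have hQcne : (T η u P).coeff n ≠ 0 := by rw [hQc]; exact mul_ne_zero hu hP
  have hQne : T η u P ≠ 0 := fun h => by rw [h, Polynomial.coeff_zero] at hQcne; exact hQcne rfl
  have hQdeg : (T η u P).natDegree = n :=
    le_antisymm (T_natDegree_le η u P hPd) (Polynomial.le_natDegree_of_ne_zero hQcne)
  have hiter := T_iter_exact η hη hQne (t := rootMultiplicity η f) (by omega)
  rw [hfu, T_mul η hη] at hT
  exact hiter.1 hT

theorem continuous_time_hankel_system_recovers_polynomial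
    (d : ℕ) (hd : 1 ≤ d) (τ : ℂ) (hτ : τ ≠ 0)
    (η : Fin d → ℂ) (hη : Function.Injective η) (hη0 : ∀ i, η i ≠ 0)
    (m : Fin d → ℕ) (hm : ∀ i, 1 ≤ m i)
    (ω : Fin d → ℕ → ℂ) (hω : ∀ i, ω i (m i - 1) ≠ 0)
    (y : ℕ → ℂ)
    (hy : ∀ k, y k = ∑ i, ∑ s ∈ Finset.range (m i),
      ω i s * ((k : ℂ) * τ) ^ s / (s.factorial : ℂ) * η i ^ k)
    (r : ℕ) (hr : r = ∑ i, m i)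
    (α : Fin r → ℂ)
    (hα : ∀ k < r, ∑ j : Fin r, α j * y (k + (j : ℕ)) = - y (k + r)) :
    (X ^ r + ∑ j : Fin r, C (α j) * X ^ (j : ℕ)) = ∏ i, (X - C (η i)) ^ m i := by
  classical
  set Pc : Fin d → ℂ[X] :=
    fun i => ∑ s ∈ Finset.range (m i), C (ω i s * τ ^ s / (s.factorial : ℂ)) * X ^ s with hPc
  have hPccoeff : ∀ i, ∀ t < m i, (Pc i).coeff t = ω i t * τ ^ t / (t.factorial : ℂ) := by
    intro i t ht
    rw [hPc]
    simp only [Polynomial.finset_sum_coeff, Polynomial.coeff_C_mul, Polynomial.coeff_X_pow]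
    rw [Finset.sum_eq_single t (fun b _ hb => by rw [if_neg (Ne.symm hb), mul_zero])
      (fun hmem => absurd (Finset.mem_range.mpr ht) hmem)]
    simp
  have hPcdeg : ∀ i, (Pc i).natDegree ≤ m i - 1 := by
    intro i
    rw [hPc]
    refine Polynomial.natDegree_sum_le_of_forall_le _ _ fun s hs => ?_
    refine (natDegree_C_mul_le _ _).trans ?_
    rw [natDegree_X_pow]
    have := Finset.mem_range.mp hs
    omega
  have hPctop : ∀ i, (Pc i).coeff (m i - 1) ≠ 0 := by
    intro i
    rw [hPccoeff i (m i - 1) (by have := hm i; omega)]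
    exact div_ne_zero (mul_ne_zero (hω i) (pow_ne_zero _ hτ))
      (Nat.cast_ne_zero.mpr (Nat.factorial_ne_zero _))
  have hy' : ∀ k : ℕ, y k = ∑ i, (Pc i).eval (k : ℂ) * η i ^ k := by
    intro k
    rw [hy k]
    refine Finset.sum_congr rfl fun i _ => ?_
    rw [hPc, Polynomial.eval_finset_sum, Finset.sum_mul]
    refine Finset.sum_congr rfl fun s _ => ?_
    rw [eval_mul, eval_C, eval_pow, eval_X, mul_pow]
    ring
  set q : ℂ[X] := ∏ i, (X - C (η i)) ^ m i with hq
  have hqmonic : q.Monic :=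
    monic_prod_of_monic _ _ fun i _ => (monic_X_sub_C (η i)).pow (m i)
  have hqdeg : q.natDegree = r := by
    rw [hq, Polynomial.natDegree_prod _ _ (fun i _ => ((monic_X_sub_C (η i)).pow (m i)).ne_zero), hr]
    exact Finset.sum_congr rfl fun i _ => by
      rw [Polynomial.natDegree_pow, natDegree_X_sub_C, mul_one]
  set p : ℂ[X] := X ^ r + ∑ j : Fin r, C (α j) * X ^ (j : ℕ) with hp
  have hr1 : 1 ≤ r := by
    rw [hr]
    calc 1 ≤ m ⟨0, hd⟩ := hm _
    _ ≤ ∑ i, m i := Finset.single_le_sum (fun i _ => Nat.zero_le _) (Finset.mem_univ _)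
  have hpcoeffr : p.coeff r = 1 := by
    rw [hp, Polynomial.coeff_add, Polynomial.coeff_X_pow, if_pos rfl]
    rw [Polynomial.finset_sum_coeff]
    rw [Finset.sum_eq_zero fun j _ => by
      rw [Polynomial.coeff_C_mul, Polynomial.coeff_X_pow, if_neg (by omega), mul_zero]]
    rw [add_zero]
  have hpcoefflt : ∀ j (hj : j < r), p.coeff j = α ⟨j, hj⟩ := by
    intro j hj
    rw [hp, Polynomial.coeff_add, Polynomial.coeff_X_pow, if_neg (by omega),
      Polynomial.finset_sum_coeff, zero_add]
    rw [Finset.sum_eq_single (⟨j, hj⟩ : Fin r)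
      (fun b _ hb => by
        rw [Polynomial.coeff_C_mul, Polynomial.coeff_X_pow, if_neg, mul_zero]
        intro hjb
        exact hb (by ext; simp [← hjb]))
      (fun hmem => absurd (Finset.mem_univ _) hmem)]
    rw [Polynomial.coeff_C_mul, Polynomial.coeff_X_pow, if_pos rfl, mul_one]
  have hpdeg : p.natDegree = r := by
    refine le_antisymm ?_ (Polynomial.le_natDegree_of_ne_zero (by rw [hpcoeffr]; exact one_ne_zero))
    rw [hp]
    refine (Polynomial.natDegree_add_le _ _).trans (max_le (by rw [natDegree_X_pow]) ?_)
    refine Polynomial.natDegree_sum_le_of_forall_le _ _ fun j _ => ?_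
    refine (natDegree_C_mul_le _ _).trans ?_
    rw [natDegree_X_pow]
    omega
  have hpne : p ≠ 0 := fun h => by rw [h, Polynomial.coeff_zero] at hpcoeffr; exact one_ne_zero hpcoeffr.symm
  have hpm : p.Monic := by rw [Polynomial.Monic, Polynomial.leadingCoeff, hpdeg, hpcoeffr]
  -- goal is p = q
  show p = q
  set f : ℂ[X] := p - q with hf
  rcases eq_or_ne f 0 with h0 | hfne
  · exact sub_eq_zero.mp h0
  exfalso
  have hfdeg : f.natDegree < r := by
    have hdlt : f.degree < q.degree := by
      rw [hf]
      have h1 := Polynomial.degree_sub_lt (p := p) (q := q)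
        (by rw [degree_eq_natDegree hpne, degree_eq_natDegree hqmonic.ne_zero, hpdeg, hqdeg])
        hpne (by rw [hpm, hqmonic])
      have h2 : p.degree = q.degree := by
        rw [degree_eq_natDegree hpne, degree_eq_natDegree hqmonic.ne_zero, hpdeg, hqdeg]
      rwa [h2] at h1
    have := Polynomial.natDegree_lt_natDegree hfne hdlt
    omega
  -- (a) q annihilates y everywhere
  have hqann : ∀ k, ann q y k = 0 := by
    intro k
    have hyfun : y = fun k' : ℕ => ∑ i, (Pc i).eval (k' : ℂ) * η i ^ k' := funext hy'
    rw [hyfun, ann_fun_sum]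
    refine Finset.sum_eq_zero fun i _ => ?_
    rw [ann_poly_exp]
    have hqfac : q = (∏ j ∈ Finset.univ.erase i, (X - C (η j)) ^ m j) * (X - C (η i)) ^ m i := by
      rw [hq, Finset.prod_erase_mul _ _ (Finset.mem_univ i)]
    rw [hqfac, T_mul _ (hη0 i), T_annihilate _ (hη0 i) (by have := hPcdeg i; have := hm i; omega),
      T_zero, Polynomial.eval_zero, zero_mul]
  -- (b) p annihilates y for k < r
  have hpann : ∀ k < r, ann p y k = 0 := by
    intro k hk
    rw [ann_eq_range p y k (r + 1) (by omega), Finset.sum_range_succ, hpcoeffr, one_mul,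
      ← Fin.sum_univ_eq_sum_range (fun j => p.coeff j * y (k + j)) r]
    have : ∑ j : Fin r, p.coeff (j : ℕ) * y (k + (j : ℕ)) = ∑ j : Fin r, α j * y (k + (j : ℕ)) :=
      Finset.sum_congr rfl fun j _ => by rw [hpcoefflt (j : ℕ) j.isLt, Fin.eta]
    rw [this, hα k hk, neg_add_cancel]
  -- f annihilates y for k < r
  have hvlt : ∀ k < r, ann f y k = 0 := by
    intro k hk
    have : ann (p - q) y k + ann q y k = ann p y k := by rw [← ann_add, sub_add_cancel]
    rw [hqann k, hpann k hk, add_zero] at this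
    rw [hf, this]
  -- f annihilates y everywhere
  have hvall : ∀ k, ann f y k = 0 := by
    intro k
    induction k using Nat.strong_induction_on with
    | _ k ih =>
      rcases lt_or_ge k r with hk | hk
      · exact hvlt k hk
      · have hqv : ann q (fun k' => ann f y k') (k - r) = 0 := by
          rw [← ann_mul, mul_comm, ann_mul]
          have : (fun k' : ℕ => ann q y k') = fun _ => (0 : ℂ) := funext hqann
          rw [this, ann_zero_seq]
        rw [ann_eq_range q _ (k - r) (r + 1) (by omega), Finset.sum_range_succ] at hqv
        have hqr : q.coeff r = 1 := by
          have := hqmonic.coeff_natDegree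
          rwa [hqdeg] at this
        rw [hqr, one_mul] at hqv
        have hkr : k - r + r = k := by omega
        rw [hkr] at hqv
        have hz : ∑ j ∈ Finset.range r, q.coeff j * ann f y (k - r + j) = 0 :=
          Finset.sum_eq_zero fun j hj => by
            rw [ih (k - r + j) (by have := Finset.mem_range.mp hj; omega), mul_zero]
        rw [hz, zero_add] at hqv
        exact hqv
  -- linear independence: each T (η i) f (Pc i) = 0
  have hT0 : ∀ i, T (η i) f (Pc i) = 0 := by
    intro i
    refine indep Finset.univ η (hη.injOn) (fun i _ => hη0 i)
      (fun i => T (η i) f (Pc i)) (fun k => ?_) i (Finset.mem_univ i)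
    have := hvall k
    have hyfun : y = fun k' : ℕ => ∑ i, (Pc i).eval (k' : ℂ) * η i ^ k' := funext hy'
    rw [hyfun, ann_fun_sum] at this
    rw [← this]
    exact Finset.sum_congr rfl fun i _ => (ann_poly_exp f (Pc i) (η i) k).symm
  -- multiplicities
  have hmult : ∀ i, m i ≤ rootMultiplicity (η i) f := by
    intro i
    have := claimB (η i) (hη0 i) hfne (hT0 i) (hPcdeg i) (hPctop i)
    have hmi := hm i
    omega
  -- counting contradiction
  have hcount : r ≤ f.natDegree := by
    calc r = ∑ i, m i := hr
    _ ≤ ∑ i, rootMultiplicity (η i) f := Finset.sum_le_sum fun i _ => hmult i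
    _ = ∑ i, f.roots.count (η i) := Finset.sum_congr rfl fun i _ => (Polynomial.count_roots f).symm
    _ = ∑ z ∈ Finset.univ.image η, f.roots.count z := by
        rw [Finset.sum_image (fun x _ y _ hxy => hη hxy)]
    _ ≤ Multiset.card f.roots := by
        rw [← Multiset.toFinset_sum_count_eq f.roots]
        rw [← Finset.sum_subset (Finset.inter_subset_left (s₂ := f.roots.toFinset))
          (fun z _ hz => by
            rw [Multiset.count_eq_zero]
            intro hmem
            exact hz (Finset.mem_inter.mpr ⟨by assumption, Multiset.mem_toFinset.mpr hmem⟩))]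
        exact Finset.sum_le_sum_of_subset Finset.inter_subset_right
    _ ≤ f.natDegree := Polynomial.card_roots' f
  omega
end
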